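/- For any building sequence a = (f_0, p_1, f_1, ..., p_h, f_h) ∈ S(n,A), the number of Motzkin paths mz of width n and area A whose building sequence a^(mz) equals a is exactly m(a) = C(f_h + p_h − 1, p_h − 1) · ∏_{i=1}^{h−1} [ C(p_{i+1} + f_i, f_i) · C(p_{i+1} + f_i + p_i − 1, p_i − 1) ] · C(p_1 + f_0, f_0), where C(·,·) denotes the binomial coefficient. -/

import Mathlib

/-- Moves of a Motzkin path: Up-right, Horizontal-right, Down-right. -/
inductive Move : Type
  | U : Move
  | H : Move
  | D : Move
deriving DecidableEq

open Move

/-- The vertical step of a move. -/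
def Move.step : Move → ℤ
  | U => 1
  | H => 0
  | D => -1

/-- The height of a path after its first `i` moves. -/
def heightAt (mz : List Move) (i : ℕ) : ℤ :=
  ((mz.take i).map Move.step).sum

/-- A word over {U,H,D} is a Motzkin path if it never goes below the x-axis
and ends on the x-axis. -/
def IsMotzkin (mz : List Move) : Prop :=
  (∀ i, 0 ≤ heightAt mz i) ∧ heightAt mz mz.length = 0

/-- The area between the x-axis and the path (sum of heights at integer points). -/
def area (mz : List Move) : ℤ :=
  ∑ i ∈ Finset.range (mz.length + 1), heightAt mz i

/-- `MZ n A` is the set of Motzkin paths of width `n` and area `A`. -/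
def MZ (n A : ℕ) : Set (List Move) :=
  {mz | mz.length = n ∧ IsMotzkin mz ∧ area mz = A}

/-- The weight `ω_i` of the `i`-th move (0-indexed): it is `h_i` for U and D moves
(height after the move for U, before the move for D) and `2h_i + 1` for H moves. -/
def moveWeight (mz : List Move) (i : ℕ) : ℤ :=
  match mz[i]? with
  | some U => heightAt mz (i + 1)
  | some D => heightAt mz i
  | some H => 2 * heightAt mz i + 1
  | none => 1

/-- The weight `ω(mz)` of a Motzkin path. -/
def weight (mz : List Move) : ℤ :=
  ∏ i ∈ Finset.range mz.length, moveWeight mz i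

/-- The total displacement `D(π) = Σ_i |i - π(i)|` of a permutation. -/
def totalDisp {n : ℕ} (π : Equiv.Perm (Fin n)) : ℤ :=
  ∑ i : Fin n, |((π i : ℕ) : ℤ) - ((i : ℕ) : ℤ)|

/-- The word over {U,H,D} associated to a permutation. -/
def toPath {n : ℕ} (π : Equiv.Perm (Fin n)) : List Move :=
  (List.finRange n).map fun i : Fin n =>
    if (i : ℕ) < (π i : ℕ) ∧ (i : ℕ) < (π.symm i : ℕ) then U
    else if (π i : ℕ) < (i : ℕ) ∧ (π.symm i : ℕ) < (i : ℕ) then D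
    else H

/-- The last fall length: the length of the maximal suffix consisting of D moves. -/
def lastFall (mz : List Move) : ℕ :=
  (mz.reverse.takeWhile (fun m => decide (m = D))).length

/-- The maximum height of a path. -/
def maxHeight (mz : List Move) : ℕ :=
  (Finset.range (mz.length + 1)).sup fun i => (heightAt mz i).toNat

/-- `flatsAt mz k` is the number of H moves of `mz` made at height `k`. -/
def flatsAt (mz : List Move) (k : ℕ) : ℕ :=
  ((Finset.range mz.length).filter fun j => mz[j]? = some H ∧ heightAt mz j = (k : ℤ)).card

/-- `peaksAt mz k` is the number of U moves of `mz` ending at height `k`. -/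
def peaksAt (mz : List Move) (k : ℕ) : ℕ :=
  ((Finset.range mz.length).filter fun j => mz[j]? = some U ∧ heightAt mz (j + 1) = (k : ℤ)).card

/-- `downsAt mz k` is the number of D moves of `mz` starting at height `k`. -/
def downsAt (mz : List Move) (k : ℕ) : ℕ :=
  ((Finset.range mz.length).filter fun j => mz[j]? = some D ∧ heightAt mz j = (k : ℤ)).card

/-- A candidate building sequence `(f_0, p_1, f_1, …, p_h, f_h)`, recorded as its
height `h` together with the flat counts `f` and peak counts `p`. -/
structure BSeq where
  h : ℕ
  f : ℕ → ℕ
  p : ℕ → ℕ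

/-- `Sset n A` is the set of building sequences for width `n` and area `A`:
all `p`-entries `p_1, …, p_h` are positive, entries beyond the height are zero, and the
width and area conditions hold. -/
def Sset (n A : ℕ) : Set BSeq :=
  {a | (∀ i, 1 ≤ i → i ≤ a.h → 0 < a.p i) ∧
       a.p 0 = 0 ∧
       (∀ i, a.h < i → a.p i = 0) ∧
       (∀ i, a.h < i → a.f i = 0) ∧
       (∑ i ∈ Finset.range (a.h + 1), a.f i) + 2 * (∑ i ∈ Finset.Icc 1 a.h, a.p i) = n ∧
       (∑ i ∈ Finset.range (a.h + 1), i * a.f i) +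
         (∑ i ∈ Finset.Icc 1 a.h, (2 * i - 1) * a.p i) = A}

/-- `mz` has building sequence `a`. -/
def hasBuildSeq (mz : List Move) (a : BSeq) : Prop :=
  maxHeight mz = a.h ∧ (∀ i, flatsAt mz i = a.f i) ∧ (∀ i, peaksAt mz i = a.p i)

/-- `perm(a) = ∏_{i=0}^h (2i+1)^{f_i} · ∏_{i=1}^h i^{2p_i}`. -/
def permWeight (a : BSeq) : ℕ :=
  (∏ i ∈ Finset.range (a.h + 1), (2 * i + 1) ^ a.f i) *
    ∏ i ∈ Finset.Icc 1 a.h, i ^ (2 * a.p i)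

/-- `m(a)`, the number of Motzkin paths with building sequence `a`. -/
def mcount (a : BSeq) : ℕ :=
  Nat.choose (a.f a.h + a.p a.h - 1) (a.p a.h - 1) *
    (∏ i ∈ Finset.Icc 1 (a.h - 1),
      Nat.choose (a.p (i + 1) + a.f i) (a.f i) *
        Nat.choose (a.p (i + 1) + a.f i + a.p i - 1) (a.p i - 1)) *
    Nat.choose (a.p 1 + a.f 0) (a.f 0)

/-- `M(n,A,l)`: the number of Motzkin paths of width `n`, area `A` and last fall length `l`
(for negative arguments there are no such paths, so the value is `0`; the value at
`(0,0,0)` is `1`, counting the empty path). -/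
noncomputable def Mcount (n A l : ℤ) : ℕ :=
  Nat.card {mz : List Move // (mz.length : ℤ) = n ∧ IsMotzkin mz ∧ area mz = A ∧
    (lastFall mz : ℤ) = l}

/-- `D(n,d,l)`: the sum of the weights of all Motzkin paths of width `n`, area `d` and
last fall length `l`. -/
noncomputable def Dw (n d l : ℤ) : ℤ :=
  ∑ᶠ mz ∈ {mz : List Move | (mz.length : ℤ) = n ∧ IsMotzkin mz ∧ area mz = d ∧
    (lastFall mz : ℤ) = l}, weight mz

/-- `M(n,A,h,p)`: the number of Motzkin paths of width `n`, area `A`, maximum height `h`,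
with exactly `p` U-moves ending at height `h` and no H-moves at height `h`. -/
noncomputable def Mtop (n A h p : ℤ) : ℕ :=
  Nat.card {mz : List Move // (mz.length : ℤ) = n ∧ IsMotzkin mz ∧ area mz = A ∧
    (maxHeight mz : ℤ) = h ∧ (peaksAt mz h.toNat : ℤ) = p ∧ flatsAt mz h.toNat = 0}

/-- `D(n,d,h,p)`: the sum of weights of Motzkin paths of width `n`, area `d`,
maximum height `h`, with exactly `p` U-moves ending at height `h` and no H-moves at height `h`. -/
noncomputable def Dtop (n d h p : ℤ) : ℤ :=
  ∑ᶠ mz ∈ {mz : List Move | (mz.length : ℤ) = n ∧ IsMotzkin mz ∧ area mz = d ∧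
    (maxHeight mz : ℤ) = h ∧ (peaksAt mz h.toNat : ℤ) = p ∧ flatsAt mz h.toNat = 0}, weight mz

/-- The area under the first `i` moves of a path (trapezoid rule; may be a half-integer). -/
def prefixArea (mz : List Move) (i : ℕ) : ℚ :=
  ∑ j ∈ Finset.range i, ((heightAt mz j : ℚ) + (heightAt mz (j + 1) : ℚ)) / 2

/-! ### Auxiliary development -/

namespace MProof

open Move List

/-- Sum of the steps of a path. -/
def S (l : List Move) : ℤ := (l.map Move.step).sum

/-- Number of H moves made at (signed, relative) height `k`. -/
def cH : List Move → ℤ → ℕ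
  | [], _ => 0
  | U :: t, k => cH t (k - 1)
  | H :: t, k => (if k = 0 then 1 else 0) + cH t k
  | D :: t, k => cH t (k + 1)

/-- Number of U moves ending at (signed, relative) height `k`. -/
def cU : List Move → ℤ → ℕ
  | [], _ => 0
  | U :: t, k => (if k = 1 then 1 else 0) + cU t (k - 1)
  | H :: t, k => cU t k
  | D :: t, k => cU t (k + 1)

/-- Number of D moves made at (signed, relative) height `k`. -/
def cD : List Move → ℤ → ℕ
  | [], _ => 0
  | U :: t, k => cD t (k - 1)
  | H :: t, k => cD t k
  | D :: t, k => (if k = 0 then 1 else 0) + cD t (k + 1)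

@[simp] lemma heightAt_zero (mz : List Move) : heightAt mz 0 = 0 := rfl

lemma heightAt_cons (x : Move) (t : List Move) (j : ℕ) :
    heightAt (x :: t) (j + 1) = x.step + heightAt t j := by
  simp [heightAt]

lemma heightAt_nil (i : ℕ) : heightAt [] i = 0 := by simp [heightAt]

lemma S_eq (mz : List Move) : S mz = heightAt mz mz.length := by
  simp [S, heightAt]

lemma heightAt_of_length_le (mz : List Move) (i : ℕ) (h : mz.length ≤ i) :
    heightAt mz i = S mz := by
  simp [heightAt, List.take_of_length_le h, S]

lemma heightAt_getElem? (mz : List Move) (j : ℕ) (x : Move) (h : mz[j]? = some x) :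
    heightAt mz (j + 1) = heightAt mz j + x.step := by
  simp [heightAt, List.take_succ, h]

lemma cH_eq : ∀ (mz : List Move) (k : ℤ),
    cH mz k = ((Finset.range mz.length).filter fun j => mz[j]? = some H ∧ heightAt mz j = k).card := by
  intro mz
  induction mz with
  | nil => intro k; simp [cH]
  | cons x t ih =>
    intro k
    have hsum : ∀ (k' : ℤ), cH t k' =
        ∑ i ∈ Finset.range t.length, (if (t[i]? = some H ∧ heightAt t i = k') then 1 else 0) :=
      fun k' => by rw [ih k', Finset.card_filter]
    rw [Finset.card_filter, List.length_cons, Finset.sum_range_succ']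
    have hterm : ∀ i, (if ((x :: t)[i+1]? = some H ∧ heightAt (x :: t) (i+1) = k) then 1 else 0)
        = (if (t[i]? = some H ∧ heightAt t i = k - x.step) then 1 else 0) := by
      intro i
      rw [List.getElem?_cons_succ, heightAt_cons]
      congr 1
      simp only [eq_iff_iff, and_congr_right_iff]
      intro _; constructor <;> intro h <;> omega
    simp only [hterm]
    rw [← hsum]
    cases x with
    | U => simp [cH, Move.step]
    | H =>
      simp only [cH, Move.step, List.getElem?_cons_zero, heightAt_zero]
      have : k - 0 = k := by ring
      rw [this]
      by_cases hk : k = 0 <;> simp [hk] <;> omega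
    | D => simp [cH, Move.step]

lemma cU_eq : ∀ (mz : List Move) (k : ℤ),
    cU mz k = ((Finset.range mz.length).filter fun j => mz[j]? = some U ∧ heightAt mz (j+1) = k).card := by
  intro mz
  induction mz with
  | nil => intro k; simp [cU]
  | cons x t ih =>
    intro k
    have hsum : ∀ (k' : ℤ), cU t k' =
        ∑ i ∈ Finset.range t.length, (if (t[i]? = some U ∧ heightAt t (i+1) = k') then 1 else 0) :=
      fun k' => by rw [ih k', Finset.card_filter]
    rw [Finset.card_filter, List.length_cons, Finset.sum_range_succ']
    have hterm : ∀ i, (if ((x :: t)[i+1]? = some U ∧ heightAt (x :: t) (i+1+1) = k) then 1 else 0)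
        = (if (t[i]? = some U ∧ heightAt t (i+1) = k - x.step) then 1 else 0) := by
      intro i
      rw [List.getElem?_cons_succ, heightAt_cons]
      congr 1
      simp only [eq_iff_iff, and_congr_right_iff]
      intro _; constructor <;> intro h <;> omega
    simp only [hterm]
    rw [← hsum]
    have h01 : heightAt (x :: t) (0 + 1) = x.step := by
      rw [heightAt_cons]; simp
    cases x with
    | U =>
      simp only [cU, Move.step, List.getElem?_cons_zero, h01]
      by_cases hk : k = 1 <;> simp [hk, Move.step] <;> omega
    | H =>
      simp only [cU, Move.step, List.getElem?_cons_zero]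
      have : k - 0 = k := by ring
      rw [this]; simp
    | D => simp [cU, Move.step]

lemma cD_eq : ∀ (mz : List Move) (k : ℤ),
    cD mz k = ((Finset.range mz.length).filter fun j => mz[j]? = some D ∧ heightAt mz j = k).card := by
  intro mz
  induction mz with
  | nil => intro k; simp [cD]
  | cons x t ih =>
    intro k
    have hsum : ∀ (k' : ℤ), cD t k' =
        ∑ i ∈ Finset.range t.length, (if (t[i]? = some D ∧ heightAt t i = k') then 1 else 0) :=
      fun k' => by rw [ih k', Finset.card_filter]
    rw [Finset.card_filter, List.length_cons, Finset.sum_range_succ']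
    have hterm : ∀ i, (if ((x :: t)[i+1]? = some D ∧ heightAt (x :: t) (i+1) = k) then 1 else 0)
        = (if (t[i]? = some D ∧ heightAt t i = k - x.step) then 1 else 0) := by
      intro i
      rw [List.getElem?_cons_succ, heightAt_cons]
      congr 1
      simp only [eq_iff_iff, and_congr_right_iff]
      intro _; constructor <;> intro h <;> omega
    simp only [hterm]
    rw [← hsum]
    cases x with
    | U => simp [cD, Move.step]
    | H =>
      simp only [cD, Move.step, List.getElem?_cons_zero]
      have : k - 0 = k := by ring
      rw [this]; simp
    | D =>
      simp only [cD, Move.step, List.getElem?_cons_zero, heightAt_zero]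
      by_cases hk : k = 0 <;> simp [hk] <;> omega

lemma flatsAt_eq (mz : List Move) (k : ℕ) : flatsAt mz k = cH mz (k : ℤ) := by
  rw [cH_eq]; rfl

lemma peaksAt_eq (mz : List Move) (k : ℕ) : peaksAt mz k = cU mz (k : ℤ) := by
  rw [cU_eq]; rfl

lemma downsAt_eq (mz : List Move) (k : ℕ) : downsAt mz k = cD mz (k : ℤ) := by
  rw [cD_eq]; rfl

end MProof
namespace MProof
open Move List

@[simp] lemma S_nil : S [] = 0 := rfl
lemma S_cons (x : Move) (t : List Move) : S (x :: t) = x.step + S t := by simp [S]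
lemma S_append (x y : List Move) : S (x ++ y) = S x + S y := by simp [S]

lemma heightAt_append (x y : List Move) (i : ℕ) :
    heightAt (x ++ y) i = heightAt x i + heightAt y (i - x.length) := by
  rw [heightAt, List.take_append, List.map_append, List.sum_append]
  rfl

lemma cH_append (x y : List Move) (k : ℤ) : cH (x ++ y) k = cH x k + cH y (k - S x) := by
  induction x generalizing k with
  | nil => simp [cH]
  | cons a t ih =>
    have ih' : ∀ k, cH (t ++ y) k = cH t k + cH y (k - S t) := ih
    cases a
    · simp only [List.cons_append, cH, S_cons, Move.step]
      rw [ih', show k - 1 - S t = k - (1 + S t) from by ring]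
      try ring
    · simp only [List.cons_append, cH, S_cons, Move.step]
      rw [ih', show k - S t = k - (0 + S t) from by ring]
      try ring
    · simp only [List.cons_append, cH, S_cons, Move.step]
      rw [ih', show k + 1 - S t = k - (-1 + S t) from by ring]
      try ring

lemma cU_append (x y : List Move) (k : ℤ) : cU (x ++ y) k = cU x k + cU y (k - S x) := by
  induction x generalizing k with
  | nil => simp [cU]
  | cons a t ih =>
    have ih' : ∀ k, cU (t ++ y) k = cU t k + cU y (k - S t) := ih
    cases a
    · simp only [List.cons_append, cU, S_cons, Move.step]
      rw [ih', show k - 1 - S t = k - (1 + S t) from by ring]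
      try ring
    · simp only [List.cons_append, cU, S_cons, Move.step]
      rw [ih', show k - S t = k - (0 + S t) from by ring]
      try ring
    · simp only [List.cons_append, cU, S_cons, Move.step]
      rw [ih', show k + 1 - S t = k - (-1 + S t) from by ring]
      try ring

lemma cD_append (x y : List Move) (k : ℤ) : cD (x ++ y) k = cD x k + cD y (k - S x) := by
  induction x generalizing k with
  | nil => simp [cD]
  | cons a t ih =>
    have ih' : ∀ k, cD (t ++ y) k = cD t k + cD y (k - S t) := ih
    cases a
    · simp only [List.cons_append, cD, S_cons, Move.step]
      rw [ih', show k - 1 - S t = k - (1 + S t) from by ring]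
      try ring
    · simp only [List.cons_append, cD, S_cons, Move.step]
      rw [ih', show k - S t = k - (0 + S t) from by ring]
      try ring
    · simp only [List.cons_append, cD, S_cons, Move.step]
      rw [ih', show k + 1 - S t = k - (-1 + S t) from by ring]
      try ring

/-- Heights are nonnegative. -/
def NN (mz : List Move) : Prop := ∀ i, 0 ≤ heightAt mz i

lemma _root_.IsMotzkin.nn {mz : List Move} (h : IsMotzkin mz) : NN mz := h.1

lemma _root_.IsMotzkin.S_eq_zero {mz : List Move} (h : IsMotzkin mz) : S mz = 0 := by
  rw [S_eq]; exact h.2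

lemma cH_neg {mz : List Move} (h : NN mz) {k : ℤ} (hk : k < 0) : cH mz k = 0 := by
  rw [cH_eq, Finset.card_eq_zero, Finset.filter_eq_empty_iff]
  intro j _
  intro hc
  have := h j
  omega

lemma cU_nonpos {mz : List Move} (h : NN mz) {k : ℤ} (hk : k ≤ 0) : cU mz k = 0 := by
  rw [cU_eq, Finset.card_eq_zero, Finset.filter_eq_empty_iff]
  intro j hj
  rintro ⟨hu, hh⟩
  have h1 := heightAt_getElem? mz j U hu
  have h2 := h j
  have hs : Move.step U = 1 := rfl
  rw [hs] at h1
  omega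

lemma cU_sub_cD (mz : List Move) (k : ℤ) :
    (cU mz k : ℤ) - cD mz k = (if k ≤ S mz then 1 else 0) - (if k ≤ 0 then 1 else 0) := by
  induction mz generalizing k with
  | nil => simp [cU, cD]; split_ifs <;> omega
  | cons a t ih =>
    cases a <;>
      simp only [cU, cD, S_cons, Move.step] <;>
      [ (have := ih (k - 1)); (have := ih k); (have := ih (k + 1)) ] <;>
      push_cast <;> split_ifs at this ⊢ <;> omega

lemma cU_eq_cD {mz : List Move} (h : IsMotzkin mz) (k : ℤ) : cU mz k = cD mz k := by
  have h2 := cU_sub_cD mz k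
  rw [h.S_eq_zero] at h2
  split_ifs at h2 <;> omega

end MProof
namespace MProof
open Move List

lemma heightAt_le (mz : List Move) (i : ℕ) : heightAt mz i ≤ i := by
  have h1 : ∀ x ∈ (mz.take i).map Move.step, x ≤ 1 := by
    intro x hx
    simp only [List.mem_map] at hx
    obtain ⟨m, _, rfl⟩ := hx
    cases m <;> simp [Move.step]
  have h2 := List.sum_le_card_nsmul _ 1 h1
  rw [List.length_map, nsmul_eq_mul, mul_one] at h2
  show ((mz.take i).map Move.step).sum ≤ (i : ℤ)
  refine le_trans h2 ?_
  exact_mod_cast List.length_take_le i mz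

/-- number of `x`-moves in `mz`. -/
def nM (mz : List Move) (x : Move) : ℕ :=
  ((Finset.range mz.length).filter fun j => mz[j]? = some x).card

lemma length_eq_nM (mz : List Move) : mz.length = nM mz U + nM mz H + nM mz D := by
  unfold nM
  have hd1 : Disjoint ((Finset.range mz.length).filter fun j => mz[j]? = some U)
      ((Finset.range mz.length).filter fun j => mz[j]? = some H) := by
    rw [Finset.disjoint_left]
    intro j h1 h2
    simp only [Finset.mem_filter] at h1 h2
    rw [h1.2] at h2
    simp at h2
  have hd2 : Disjoint (((Finset.range mz.length).filter fun j => mz[j]? = some U)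
      ∪ ((Finset.range mz.length).filter fun j => mz[j]? = some H))
      ((Finset.range mz.length).filter fun j => mz[j]? = some D) := by
    rw [Finset.disjoint_left]
    intro j h1 h2
    simp only [Finset.mem_union, Finset.mem_filter] at h1 h2
    rcases h1 with h1 | h1 <;> rw [h1.2] at h2 <;> simp at h2
  have hun : Finset.range mz.length =
      (((Finset.range mz.length).filter fun j => mz[j]? = some U)
      ∪ ((Finset.range mz.length).filter fun j => mz[j]? = some H))
      ∪ ((Finset.range mz.length).filter fun j => mz[j]? = some D) := by
    ext j
    simp only [Finset.mem_union, Finset.mem_filter, Finset.mem_range]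
    constructor
    · intro hj
      have hg : mz[j]? = some mz[j] := List.getElem?_eq_getElem hj
      rcases hm : mz[j] with _ | _ | _ <;> rw [hm] at hg <;> tauto
    · tauto
  conv_lhs => rw [← Finset.card_range mz.length, hun]
  rw [Finset.card_union_of_disjoint hd2, Finset.card_union_of_disjoint hd1]

lemma nH_eq_sum {mz : List Move} (hnn : NN mz) {M : ℕ} (hM : mz.length ≤ M) :
    nM mz H = ∑ k ∈ Finset.range (M + 1), cH mz (k : ℤ) := by
  unfold nM
  rw [Finset.card_eq_sum_card_fiberwise
    (f := fun j => (heightAt mz j).toNat) (t := Finset.range (M + 1))]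
  · refine Finset.sum_congr rfl fun k _ => ?_
    rw [cH_eq, Finset.filter_filter]
    congr 1
    refine Finset.filter_congr fun j _ => ?_
    have := hnn j
    constructor
    · rintro ⟨h1, h2⟩; exact ⟨h1, by omega⟩
    · rintro ⟨h1, h2⟩; exact ⟨h1, by omega⟩
  · intro j hj
    simp only [Finset.mem_filter, Finset.mem_range, Finset.mem_coe] at hj ⊢
    have := heightAt_le mz j
    have := hnn j
    omega

lemma nU_eq_sum {mz : List Move} (hnn : NN mz) {M : ℕ} (hM : mz.length ≤ M) :
    nM mz U = ∑ k ∈ Finset.range (M + 1), cU mz (k : ℤ) := by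
  unfold nM
  rw [Finset.card_eq_sum_card_fiberwise
    (f := fun j => (heightAt mz (j + 1)).toNat) (t := Finset.range (M + 1))]
  · refine Finset.sum_congr rfl fun k _ => ?_
    rw [cU_eq, Finset.filter_filter]
    congr 1
    refine Finset.filter_congr fun j _ => ?_
    have := hnn (j + 1)
    constructor
    · rintro ⟨h1, h2⟩; exact ⟨h1, by omega⟩
    · rintro ⟨h1, h2⟩; exact ⟨h1, by omega⟩
  · intro j hj
    simp only [Finset.mem_filter, Finset.mem_range, Finset.mem_coe] at hj ⊢
    have := heightAt_le mz (j + 1)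
    have := hnn (j + 1)
    omega

lemma nD_eq_sum {mz : List Move} (hnn : NN mz) {M : ℕ} (hM : mz.length ≤ M) :
    nM mz D = ∑ k ∈ Finset.range (M + 1), cD mz (k : ℤ) := by
  unfold nM
  rw [Finset.card_eq_sum_card_fiberwise
    (f := fun j => (heightAt mz j).toNat) (t := Finset.range (M + 1))]
  · refine Finset.sum_congr rfl fun k _ => ?_
    rw [cD_eq, Finset.filter_filter]
    congr 1
    refine Finset.filter_congr fun j _ => ?_
    have := hnn j
    constructor
    · rintro ⟨h1, h2⟩; exact ⟨h1, by omega⟩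
    · rintro ⟨h1, h2⟩; exact ⟨h1, by omega⟩
  · intro j hj
    simp only [Finset.mem_filter, Finset.mem_range, Finset.mem_coe] at hj ⊢
    have := heightAt_le mz j
    have := hnn j
    omega

lemma area_eq_sum (mz : List Move) :
    area mz = ∑ j ∈ Finset.range mz.length, heightAt mz (j + 1) := by
  rw [area, Finset.sum_range_succ']
  simp


lemma sumH_fiber {mz : List Move} (hnn : NN mz) {M : ℕ} (hM : mz.length ≤ M) :
    ∑ j ∈ (Finset.range mz.length).filter (fun j => mz[j]? = some H), heightAt mz j
      = ∑ k ∈ Finset.range (M + 1), (k : ℤ) * cH mz (k : ℤ) := by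
  rw [← Finset.sum_fiberwise_of_maps_to (g := fun j => (heightAt mz j).toNat)
    (t := Finset.range (M + 1))]
  · refine Finset.sum_congr rfl fun k _ => ?_
    have hval : ∀ j ∈ ((Finset.range mz.length).filter fun j => mz[j]? = some H).filter
        (fun j => (heightAt mz j).toNat = k), heightAt mz j = (k : ℤ) := by
      intro j hj
      simp only [Finset.mem_filter] at hj
      have := hnn j
      omega
    rw [Finset.sum_congr rfl hval, Finset.sum_const, nsmul_eq_mul, mul_comm]
    congr 1
    rw [cH_eq, Finset.filter_filter]
    have : (Finset.filter (fun j => mz[j]? = some H ∧ (heightAt mz j).toNat = k)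
        (Finset.range mz.length)) = (Finset.filter (fun j => mz[j]? = some H ∧ heightAt mz j = (k:ℤ))
        (Finset.range mz.length)) := by
      refine Finset.filter_congr fun j _ => ?_
      have := hnn j
      constructor
      · rintro ⟨h1, h2⟩; exact ⟨h1, by omega⟩
      · rintro ⟨h1, h2⟩; exact ⟨h1, by omega⟩
    rw [this]
  · intro j hj
    simp only [Finset.mem_filter, Finset.mem_range] at hj ⊢
    have := heightAt_le mz j
    have := hnn j
    omega

lemma sumU_fiber {mz : List Move} (hnn : NN mz) {M : ℕ} (hM : mz.length ≤ M) :
    ∑ j ∈ (Finset.range mz.length).filter (fun j => mz[j]? = some U), heightAt mz (j + 1)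
      = ∑ k ∈ Finset.range (M + 1), (k : ℤ) * cU mz (k : ℤ) := by
  rw [← Finset.sum_fiberwise_of_maps_to (g := fun j => (heightAt mz (j + 1)).toNat)
    (t := Finset.range (M + 1))]
  · refine Finset.sum_congr rfl fun k _ => ?_
    have hval : ∀ j ∈ ((Finset.range mz.length).filter fun j => mz[j]? = some U).filter
        (fun j => (heightAt mz (j + 1)).toNat = k), heightAt mz (j + 1) = (k : ℤ) := by
      intro j hj
      simp only [Finset.mem_filter] at hj
      have := hnn (j + 1)
      omega
    rw [Finset.sum_congr rfl hval, Finset.sum_const, nsmul_eq_mul, mul_comm]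
    congr 1
    rw [cU_eq, Finset.filter_filter]
    have : (Finset.filter (fun j => mz[j]? = some U ∧ (heightAt mz (j + 1)).toNat = k)
        (Finset.range mz.length)) = (Finset.filter (fun j => mz[j]? = some U ∧ heightAt mz (j + 1) = (k:ℤ))
        (Finset.range mz.length)) := by
      refine Finset.filter_congr fun j _ => ?_
      have := hnn (j + 1)
      constructor
      · rintro ⟨h1, h2⟩; exact ⟨h1, by omega⟩
      · rintro ⟨h1, h2⟩; exact ⟨h1, by omega⟩
    rw [this]
  · intro j hj
    simp only [Finset.mem_filter, Finset.mem_range] at hj ⊢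
    have := heightAt_le mz (j + 1)
    have := hnn (j + 1)
    omega

lemma sumD_fiber {mz : List Move} (hnn : NN mz) {M : ℕ} (hM : mz.length ≤ M) :
    ∑ j ∈ (Finset.range mz.length).filter (fun j => mz[j]? = some D), (heightAt mz j - 1)
      = ∑ k ∈ Finset.range (M + 1), ((k : ℤ) - 1) * cD mz (k : ℤ) := by
  rw [← Finset.sum_fiberwise_of_maps_to (g := fun j => (heightAt mz j).toNat)
    (t := Finset.range (M + 1))]
  · refine Finset.sum_congr rfl fun k _ => ?_
    have hval : ∀ j ∈ ((Finset.range mz.length).filter fun j => mz[j]? = some D).filter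
        (fun j => (heightAt mz j).toNat = k), heightAt mz j - 1 = (k : ℤ) - 1 := by
      intro j hj
      simp only [Finset.mem_filter] at hj
      have := hnn j
      omega
    rw [Finset.sum_congr rfl hval, Finset.sum_const, nsmul_eq_mul, mul_comm]
    congr 1
    rw [cD_eq, Finset.filter_filter]
    have : (Finset.filter (fun j => mz[j]? = some D ∧ (heightAt mz j).toNat = k)
        (Finset.range mz.length)) = (Finset.filter (fun j => mz[j]? = some D ∧ heightAt mz j = (k:ℤ))
        (Finset.range mz.length)) := by
      refine Finset.filter_congr fun j _ => ?_
      have := hnn j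
      constructor
      · rintro ⟨h1, h2⟩; exact ⟨h1, by omega⟩
      · rintro ⟨h1, h2⟩; exact ⟨h1, by omega⟩
    rw [this]
  · intro j hj
    simp only [Finset.mem_filter, Finset.mem_range] at hj ⊢
    have := heightAt_le mz j
    have := hnn j
    omega

/-- Area split by move types and heights. -/
lemma area_eq_weighted {mz : List Move} (hnn : NN mz) {M : ℕ} (hM : mz.length ≤ M) :
    area mz = (∑ k ∈ Finset.range (M + 1), (k : ℤ) * cH mz (k : ℤ))
      + (∑ k ∈ Finset.range (M + 1), (k : ℤ) * cU mz (k : ℤ))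
      + (∑ k ∈ Finset.range (M + 1), ((k : ℤ) - 1) * cD mz (k : ℤ)) := by
  rw [area_eq_sum]
  have hsplit : ∀ j ∈ Finset.range mz.length,
      heightAt mz (j + 1) =
        (if mz[j]? = some H then heightAt mz j else 0)
        + (if mz[j]? = some U then heightAt mz (j + 1) else 0)
        + (if mz[j]? = some D then heightAt mz j - 1 else 0) := by
    intro j hj
    rw [Finset.mem_range] at hj
    have hg : mz[j]? = some mz[j] := List.getElem?_eq_getElem hj
    have hstep := heightAt_getElem? mz j mz[j] hg
    rcases hm : mz[j] with _ | _ | _ <;> rw [hm] at hg hstep <;>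
      simp only [hg] <;> simp [Move.step] at hstep ⊢ <;> omega
  rw [Finset.sum_congr rfl hsplit, Finset.sum_add_distrib, Finset.sum_add_distrib,
    ← Finset.sum_filter (fun j => mz[j]? = some H) (fun j => heightAt mz j),
    ← Finset.sum_filter (fun j => mz[j]? = some U) (fun j => heightAt mz (j + 1)),
    ← Finset.sum_filter (fun j => mz[j]? = some D) (fun j => heightAt mz j - 1),
    sumH_fiber hnn hM, sumU_fiber hnn hM, sumD_fiber hnn hM]

end MProof
namespace MProof
open Move List

lemma heightAt_le_maxHeight (mz : List Move) (i : ℕ) :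
    heightAt mz i ≤ (maxHeight mz : ℤ) := by
  have key : ∀ j, j ≤ mz.length → heightAt mz j ≤ (maxHeight mz : ℤ) := by
    intro j hj
    have hmem : j ∈ Finset.range (mz.length + 1) := Finset.mem_range.mpr (by omega)
    have := Finset.le_sup (f := fun i => (heightAt mz i).toNat) hmem
    have h2 : heightAt mz j ≤ ((heightAt mz j).toNat : ℤ) := Int.self_le_toNat _
    calc heightAt mz j ≤ ((heightAt mz j).toNat : ℤ) := h2
      _ ≤ (maxHeight mz : ℤ) := by exact_mod_cast this
  by_cases hi : i ≤ mz.length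
  · exact key i hi
  · rw [heightAt_of_length_le mz i (by omega), S_eq]
    exact key mz.length le_rfl

lemma maxHeight_achieved (mz : List Move) :
    ∃ i ≤ mz.length, (heightAt mz i).toNat = maxHeight mz := by
  obtain ⟨i, hi, hv⟩ := Finset.exists_mem_eq_sup (Finset.range (mz.length + 1))
    (Finset.nonempty_range_iff.mpr (by omega)) (fun i => (heightAt mz i).toNat)
  exact ⟨i, by have := Finset.mem_range.mp hi; omega, hv.symm⟩

lemma cU_maxHeight_pos {mz : List Move} (h1 : 1 ≤ maxHeight mz) :
    0 < cU mz (maxHeight mz : ℤ) := by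
  obtain ⟨i, hi, hv⟩ := maxHeight_achieved mz
  have hex : ∃ j, heightAt mz j = (maxHeight mz : ℤ) := ⟨i, by omega⟩
  classical
  let j0 := Nat.find hex
  have hj0 : heightAt mz j0 = (maxHeight mz : ℤ) := Nat.find_spec hex
  have hj0min : ∀ j < j0, heightAt mz j ≠ (maxHeight mz : ℤ) := fun j hj => Nat.find_min hex hj
  have hj0pos : 1 ≤ j0 := by
    rcases Nat.eq_zero_or_pos j0 with h | h
    · exfalso; rw [h] at hj0; simp at hj0; omega
    · exact h
  have hj0le : j0 ≤ mz.length :=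
    le_trans (Nat.find_min' hex (show heightAt mz i = ((maxHeight mz : ℕ) : ℤ) by omega)) hi
  have hlt : j0 - 1 < mz.length := by omega
  have hg : mz[j0 - 1]? = some mz[j0 - 1] := List.getElem?_eq_getElem hlt
  have hstep : heightAt mz (j0 - 1 + 1) = heightAt mz (j0 - 1) + (mz[j0 - 1]).step :=
    heightAt_getElem? mz (j0 - 1) _ hg
  have hsucc : j0 - 1 + 1 = j0 := by omega
  rw [hsucc] at hstep
  have hlemax := heightAt_le_maxHeight mz (j0 - 1)
  have hne := hj0min (j0 - 1) (by omega)
  have hU : mz[j0 - 1] = U := by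
    rcases hm : mz[j0 - 1] with _ | _ | _ <;> rw [hm] at hstep <;>
      simp [Move.step] at hstep <;> first | rfl | omega
  rw [cU_eq, Finset.card_pos]
  refine ⟨j0 - 1, ?_⟩
  rw [Finset.mem_filter, Finset.mem_range]
  rw [hU] at hg
  exact ⟨hlt, hg, by rw [hsucc]; exact hj0⟩

lemma le_maxHeight_of_cU_pos {mz : List Move} {k : ℕ} (h : 0 < cU mz (k : ℤ)) :
    k ≤ maxHeight mz := by
  rw [cU_eq, Finset.card_pos] at h
  obtain ⟨j, hj⟩ := h
  rw [Finset.mem_filter] at hj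
  have := heightAt_le_maxHeight mz (j + 1)
  have := hj.2.2
  omega

lemma maxHeight_eq_of_profile {mz : List Move} (hm : IsMotzkin mz) {h : ℕ} {p : ℕ → ℕ}
    (hp : ∀ k : ℕ, cU mz (k : ℤ) = p k) (hpos : 1 ≤ h → 0 < p h)
    (hsupp : ∀ k, h < k → p k = 0) : maxHeight mz = h := by
  refine le_antisymm ?_ ?_
  · by_contra hgt
    push_neg at hgt
    have h1 : 1 ≤ maxHeight mz := by omega
    have h2 := cU_maxHeight_pos h1
    rw [hp] at h2
    rw [hsupp _ hgt] at h2
    omega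
  · rcases Nat.eq_zero_or_pos h with h0 | h0
    · omega
    · exact le_maxHeight_of_cU_pos (k := h) (by rw [hp]; exact hpos h0)

lemma length_eq_of_profile {mz : List Move} (hm : IsMotzkin mz) {h : ℕ} {f p : ℕ → ℕ}
    (hf : ∀ k : ℕ, cH mz (k : ℤ) = f k) (hp : ∀ k : ℕ, cU mz (k : ℤ) = p k)
    (hfs : ∀ k, h < k → f k = 0) (hps : ∀ k, h < k → p k = 0) :
    mz.length = (∑ i ∈ Finset.range (h + 1), f i) + 2 * ∑ i ∈ Finset.Icc 1 h, p i := by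
  set M := max mz.length h with hMdef
  have hM : mz.length ≤ M := le_max_left _ _
  have hhM : h ≤ M := le_max_right _ _
  have hsumH : ∑ k ∈ Finset.range (M + 1), cH mz (k : ℤ) = ∑ i ∈ Finset.range (h + 1), f i := by
    rw [Finset.sum_congr rfl (fun k _ => hf k)]
    exact (Finset.sum_subset (Finset.range_subset_range.mpr (by omega))
      (fun k _ hk => hfs k (by simp at hk ⊢; omega))).symm
  have hp0 : p 0 = 0 := by rw [← hp 0]; exact cU_nonpos hm.nn le_rfl
  have hp0 : p 0 = 0 := by rw [← hp 0]; exact cU_nonpos hm.nn le_rfl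
  have e1 : Finset.range (M + 1) \ {0} = Finset.Icc 1 M := by
    ext x; simp only [Finset.mem_sdiff, Finset.mem_range, Finset.mem_singleton, Finset.mem_Icc]
    omega
  have hsumU : ∑ k ∈ Finset.range (M + 1), cU mz (k : ℤ) = ∑ i ∈ Finset.Icc 1 h, p i := by
    rw [Finset.sum_congr rfl (fun k _ => hp k),
      Finset.sum_eq_sum_sdiff_singleton_add (Finset.mem_range.mpr (by omega) : (0:ℕ) ∈ _),
      e1, hp0, add_zero]
    exact (Finset.sum_subset (by intro x hx; simp at hx ⊢; omega)
      (fun k hk hk2 => hps k (by simp at hk hk2; omega))).symm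
  have hsumD : ∑ k ∈ Finset.range (M + 1), cD mz (k : ℤ)
      = ∑ k ∈ Finset.range (M + 1), cU mz (k : ℤ) :=
    Finset.sum_congr rfl (fun k _ => (cU_eq_cD hm k).symm)
  rw [length_eq_nM, nH_eq_sum hm.nn hM, nU_eq_sum hm.nn hM, nD_eq_sum hm.nn hM,
    hsumD, hsumH, hsumU]
  ring

lemma area_eq_of_profile {mz : List Move} (hm : IsMotzkin mz) {h : ℕ} {f p : ℕ → ℕ}
    (hf : ∀ k : ℕ, cH mz (k : ℤ) = f k) (hp : ∀ k : ℕ, cU mz (k : ℤ) = p k)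
    (hfs : ∀ k, h < k → f k = 0) (hps : ∀ k, h < k → p k = 0) :
    area mz = (∑ i ∈ Finset.range (h + 1), (i : ℤ) * f i)
      + ∑ i ∈ Finset.Icc 1 h, (2 * (i : ℤ) - 1) * p i := by
  set M := max mz.length h with hMdef
  have hM : mz.length ≤ M := le_max_left _ _
  have hhM : h ≤ M := le_max_right _ _
  have hp0 : p 0 = 0 := by rw [← hp 0]; exact cU_nonpos hm.nn le_rfl
  have e1 : Finset.range (M + 1) \ {0} = Finset.Icc 1 M := by
    ext x; simp only [Finset.mem_sdiff, Finset.mem_range, Finset.mem_singleton, Finset.mem_Icc]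
    omega
  have h0mem : (0 : ℕ) ∈ Finset.range (M + 1) := Finset.mem_range.mpr (by omega)
  rw [area_eq_weighted hm.nn hM]
  have hsumH : ∑ k ∈ Finset.range (M + 1), (k : ℤ) * cH mz (k : ℤ)
      = ∑ i ∈ Finset.range (h + 1), (i : ℤ) * f i := by
    rw [Finset.sum_congr rfl (fun k _ => by rw [hf k])]
    refine (Finset.sum_subset (Finset.range_subset_range.mpr (by omega)) ?_).symm
    intro k _ hk
    rw [hfs k (by simp at hk ⊢; omega)]
    simp
  have hsumU : ∑ k ∈ Finset.range (M + 1), (k : ℤ) * cU mz (k : ℤ)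
      = ∑ i ∈ Finset.Icc 1 h, (i : ℤ) * p i := by
    rw [Finset.sum_congr rfl (fun k _ => by rw [hp k]),
      Finset.sum_eq_sum_sdiff_singleton_add h0mem, e1]
    simp only [Nat.cast_zero, zero_mul, add_zero]
    refine (Finset.sum_subset (by intro x hx; simp at hx ⊢; omega) ?_).symm
    intro k hk hk2
    rw [hps k (by simp at hk hk2; omega)]
    simp
  have hsumD : ∑ k ∈ Finset.range (M + 1), ((k : ℤ) - 1) * cD mz (k : ℤ)
      = ∑ i ∈ Finset.Icc 1 h, ((i : ℤ) - 1) * p i := by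
    rw [Finset.sum_congr rfl (fun k _ => by rw [← cU_eq_cD hm, hp k]),
      Finset.sum_eq_sum_sdiff_singleton_add h0mem, e1, hp0]
    simp only [Nat.cast_zero, mul_zero, add_zero]
    refine (Finset.sum_subset (by intro x hx; simp at hx ⊢; omega) ?_).symm
    intro k hk hk2
    rw [hps k (by simp at hk hk2; omega)]
    simp
  rw [hsumH, hsumU, hsumD, add_assoc, ← Finset.sum_add_distrib]
  congr 1
  refine Finset.sum_congr rfl fun i _ => ?_
  ring

/-- The key reduction: membership in the theorem's set is equivalent to a pure
profile condition. -/
lemma mem_set_iff (n A : ℕ) (a : BSeq) (ha : a ∈ Sset n A) (mz : List Move) :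
    (mz.length = n ∧ IsMotzkin mz ∧ area mz = (A : ℤ) ∧ hasBuildSeq mz a) ↔
    (IsMotzkin mz ∧ (∀ k : ℕ, cH mz (k : ℤ) = a.f k) ∧ (∀ k : ℕ, cU mz (k : ℤ) = a.p k)) := by
  obtain ⟨hpos, hp0, hpsupp, hfsupp, hwidth, harea⟩ := ha
  constructor
  · rintro ⟨-, hm, -, -, hfl, hpk⟩
    exact ⟨hm, fun k => by rw [← flatsAt_eq, hfl k], fun k => by rw [← peaksAt_eq, hpk k]⟩
  · rintro ⟨hm, hf, hp⟩
    have hlen := length_eq_of_profile hm hf hp hfsupp hpsupp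
    have har := area_eq_of_profile hm hf hp hfsupp hpsupp
    refine ⟨by rw [hlen, hwidth], hm, ?_, ?_, fun k => by rw [flatsAt_eq, hf k],
      fun k => by rw [peaksAt_eq, hp k]⟩
    · rw [har, ← harea]
      push_cast
      congr 1
      refine Finset.sum_congr rfl fun i hi => ?_
      rw [Finset.mem_Icc] at hi
      have : ((2 * i - 1 : ℕ) : ℤ) = 2 * (i : ℤ) - 1 := by omega
      rw [this]
    · exact maxHeight_eq_of_profile hm hp (fun h1 => hpos a.h h1 le_rfl) hpsupp

end MProof
namespace MPproofX
end MPproofX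
namespace MProof
open Move List

/-- Assemble a Motzkin path from a shape word (`false` = flat at level 0, `true` =
excursion) and the list of excursion bodies. -/
def assemble : List Bool → List (List Move) → List Move
  | [], _ => []
  | false :: s, ms => H :: assemble s ms
  | true :: s, [] => (U :: [D]) ++ assemble s []
  | true :: s, m :: ms => (U :: (m ++ [D])) ++ assemble s ms

lemma motzkin_nil : IsMotzkin ([] : List Move) := by
  constructor
  · intro i; rw [heightAt_nil]
  · rw [heightAt_nil]

lemma motzkin_append {x y : List Move} (hx : IsMotzkin x) (hy : IsMotzkin y) :
    IsMotzkin (x ++ y) := by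
  constructor
  · intro i
    rw [heightAt_append]
    have := hx.1 i
    have := hy.1 (i - x.length)
    omega
  · rw [List.length_append, heightAt_append]
    have h1 : heightAt x (x.length + y.length) = S x :=
      heightAt_of_length_le x _ (by omega)
    have h2 : x.length + y.length - x.length = y.length := by omega
    rw [h1, h2, hx.S_eq_zero, hy.2]
    ring

lemma motzkin_cons_H {t : List Move} (ht : IsMotzkin t) : IsMotzkin (H :: t) := by
  constructor
  · intro i
    cases i with
    | zero => simp
    | succ j =>
      rw [heightAt_cons]
      have := ht.1 j
      simp only [Move.step]
      omega
  · rw [List.length_cons, heightAt_cons, ht.2]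
    simp [Move.step]

lemma heightAt_D (j : ℕ) : heightAt [D] j = if j = 0 then 0 else -1 := by
  cases j with
  | zero => simp
  | succ i =>
    have h := heightAt_cons D [] i
    rw [h, heightAt_nil]
    simp [Move.step]

lemma S_D : S [D] = -1 := by simp [S, Move.step]

lemma motzkin_arch {m : List Move} (hm : IsMotzkin m) : IsMotzkin (U :: (m ++ [D])) := by
  constructor
  · intro i
    cases i with
    | zero => simp
    | succ j =>
      rw [heightAt_cons, heightAt_append, heightAt_D]
      have := hm.1 j
      simp only [Move.step]
      by_cases hj : j - m.length = 0 <;> simp only [hj, if_true, if_false] <;> omega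
  · have h := heightAt_cons U (m ++ [D]) ((m ++ [D]).length)
    rw [List.length_cons, h, ← S_eq, S_append, hm.S_eq_zero, S_D]
    simp [Move.step]

lemma assemble_motzkin : ∀ (s : List Bool) (ms : List (List Move)),
    (∀ m ∈ ms, IsMotzkin m) → IsMotzkin (assemble s ms) := by
  intro s
  induction s with
  | nil => intro ms _; exact motzkin_nil
  | cons b s ih =>
    intro ms hval
    cases b with
    | false => exact motzkin_cons_H (ih ms hval)
    | true =>
      cases ms with
      | nil =>
        show IsMotzkin ((U :: ([] ++ [D])) ++ assemble s [])
        exact motzkin_append (motzkin_arch motzkin_nil) (ih [] (by simp))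
      | cons m ms =>
        refine motzkin_append (motzkin_arch (hval m (by simp))) (ih ms ?_)
        intro m' hm'
        exact hval m' (by simp [hm'])

lemma S_arch {m : List Move} (hm : IsMotzkin m) : S (U :: (m ++ [D])) = 0 := by
  rw [S_cons, S_append, hm.S_eq_zero, S_D]
  simp [Move.step]

lemma cH_assemble : ∀ (s : List Bool) (ms : List (List Move)),
    ms.length = s.count true → (∀ m ∈ ms, IsMotzkin m) → ∀ k : ℤ,
    cH (assemble s ms) k
      = (if k = 0 then s.count false else 0) + (ms.map (fun m => cH m (k - 1))).sum := by
  intro s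
  induction s with
  | nil =>
    intro ms hlen _ k
    simp only [List.count_nil] at hlen
    rw [List.length_eq_zero_iff] at hlen
    subst hlen
    simp [assemble, cH]
  | cons b s ih =>
    intro ms hlen hval k
    cases b with
    | false =>
      have hcf : (false :: s).count false = s.count false + 1 := by simp
      have hct : (false :: s).count true = s.count true := by simp
      rw [hct] at hlen
      show cH (H :: assemble s ms) k = _
      rw [show cH (H :: assemble s ms) k = (if k = 0 then 1 else 0) + cH (assemble s ms) k
        from rfl, ih ms hlen hval k, hcf]
      by_cases hk : k = 0 <;> simp [hk] <;> ring
    | true =>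
      have hct : (true :: s).count true = s.count true + 1 := by simp
      have hcf : (true :: s).count false = s.count false := by simp
      rw [hct] at hlen
      cases ms with
      | nil => simp at hlen
      | cons m ms =>
        have hmm : IsMotzkin m := hval m (by simp)
        have hval' : ∀ m' ∈ ms, IsMotzkin m' := fun m' hm' => hval m' (by simp [hm'])
        have hlen' : ms.length = s.count true := by simpa using hlen
        show cH ((U :: (m ++ [D])) ++ assemble s ms) k = _
        rw [cH_append, S_arch hmm, sub_zero, ih ms hlen' hval' k, hcf]
        have harch : cH (U :: (m ++ [D])) k = cH m (k - 1) := by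
          show cH (m ++ [D]) (k - 1) = _
          rw [cH_append]
          show cH m (k - 1) + cH [D] _ = cH m (k - 1)
          rw [show ∀ z : ℤ, cH [D] z = 0 from fun z => rfl]
          simp
        rw [harch]
        simp only [List.map_cons, List.sum_cons]
        ring

lemma cU_assemble : ∀ (s : List Bool) (ms : List (List Move)),
    ms.length = s.count true → (∀ m ∈ ms, IsMotzkin m) → ∀ k : ℤ,
    cU (assemble s ms) k
      = (if k = 1 then s.count true else 0) + (ms.map (fun m => cU m (k - 1))).sum := by
  intro s
  induction s with
  | nil =>
    intro ms hlen _ k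
    simp only [List.count_nil] at hlen
    rw [List.length_eq_zero_iff] at hlen
    subst hlen
    simp [assemble, cU]
  | cons b s ih =>
    intro ms hlen hval k
    cases b with
    | false =>
      have hct : (false :: s).count true = s.count true := by simp
      rw [hct] at hlen
      show cU (H :: assemble s ms) k = _
      rw [show cU (H :: assemble s ms) k = cU (assemble s ms) k from rfl,
        ih ms hlen hval k, hct]
    | true =>
      have hct : (true :: s).count true = s.count true + 1 := by simp
      rw [hct] at hlen
      cases ms with
      | nil => simp at hlen
      | cons m ms =>
        have hmm : IsMotzkin m := hval m (by simp)
        have hval' : ∀ m' ∈ ms, IsMotzkin m' := fun m' hm' => hval m' (by simp [hm'])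
        have hlen' : ms.length = s.count true := by simpa using hlen
        show cU ((U :: (m ++ [D])) ++ assemble s ms) k = _
        rw [cU_append, S_arch hmm, sub_zero, ih ms hlen' hval' k, hct]
        have harch : cU (U :: (m ++ [D])) k = (if k = 1 then 1 else 0) + cU m (k - 1) := by
          show (if k = 1 then 1 else 0) + cU (m ++ [D]) (k - 1) = _
          rw [cU_append]
          show (if k = 1 then 1 else 0) + (cU m (k - 1) + cU [D] _) = _
          rw [show ∀ z : ℤ, cU [D] z = 0 from fun z => rfl]
          ring
        rw [harch]
        simp only [List.map_cons, List.sum_cons]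
        push_cast
        by_cases hk : k = 1 <;> simp [hk] <;> ring

end MProof
namespace MProof
open Move List

lemma heightAt_take (l : List Move) (n i : ℕ) :
    heightAt (l.take n) i = heightAt l (min i n) := by
  rw [heightAt, heightAt, List.take_take]

lemma heightAt_drop (l : List Move) (n i : ℕ) :
    heightAt (l.drop n) i = heightAt l (n + i) - heightAt l n := by
  have h : l.take (n + i) = l.take n ++ (l.drop n).take i := List.take_add (l := l) (i := n) (j := i)
  have : heightAt l (n + i) = heightAt l n + heightAt (l.drop n) i := by
    rw [heightAt, h, List.map_append, List.sum_append]; rfl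
  omega

/-- Unique parsing: the first excursion body is determined. -/
lemma motzkin_prefix_eq : ∀ {m1 m2 x y : List Move}, IsMotzkin m1 → IsMotzkin m2 →
    m1 ++ D :: x = m2 ++ D :: y → m1 = m2 ∧ x = y := by
  have key : ∀ {m1 m2 x y : List Move}, m1.length ≤ m2.length → IsMotzkin m1 → IsMotzkin m2 →
      m1 ++ D :: x = m2 ++ D :: y → m1.length = m2.length := by
    intro m1 m2 x y hle h1 h2 he
    by_contra hne
    have hlt : m1.length < m2.length := by omega
    -- element at position m1.length
    have e1 : (m1 ++ D :: x)[m1.length]? = some D := by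
      rw [List.getElem?_append_right le_rfl]
      simp
    have e2 : (m2 ++ D :: y)[m1.length]? = m2[m1.length]? := by
      rw [List.getElem?_append_left hlt]
    have eD : m2[m1.length]? = some D := by rw [← e2, ← he, e1]
    have t1 : (m1 ++ D :: x).take m1.length = m1 := by
      rw [List.take_append]
      simp
    have t2 : (m2 ++ D :: y).take m1.length = m2.take m1.length := by
      rw [List.take_append]
      have : m1.length - m2.length = 0 := by omega
      rw [this]
      simp [List.take_of_length_le, le_of_lt hlt]
    have ht : m2.take m1.length = m1 := by rw [← t2, ← he, t1]
    have hh : heightAt m2 m1.length = 0 := by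
      rw [heightAt, ht, ← S]
      exact h1.S_eq_zero
    have hstep := heightAt_getElem? m2 m1.length D eD
    have := h2.1 (m1.length + 1)
    rw [hstep, hh] at this
    simp [Move.step] at this
  intro m1 m2 x y h1 h2 he
  have hlen : m1.length = m2.length := by
    rcases le_total m1.length m2.length with h | h
    · exact key h h1 h2 he
    · exact (key h h2 h1 he.symm).symm
  obtain ⟨hm, htail⟩ := List.append_inj he hlen
  exact ⟨hm, by injection htail⟩

lemma assemble_inj : ∀ (s1 : List Bool) (ms1 : List (List Move)) (s2 : List Bool)
    (ms2 : List (List Move)), ms1.length = s1.count true → ms2.length = s2.count true →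
    (∀ m ∈ ms1, IsMotzkin m) → (∀ m ∈ ms2, IsMotzkin m) →
    assemble s1 ms1 = assemble s2 ms2 → s1 = s2 ∧ ms1 = ms2 := by
  intro s1
  induction s1 with
  | nil =>
    intro ms1 s2 ms2 hl1 hl2 hv1 hv2 he
    simp only [List.count_nil] at hl1
    rw [List.length_eq_zero_iff] at hl1
    subst hl1
    cases s2 with
    | nil =>
      simp only [List.count_nil] at hl2
      rw [List.length_eq_zero_iff] at hl2
      subst hl2
      exact ⟨rfl, rfl⟩
    | cons b s2 =>
      exfalso
      cases b with
      | false => exact absurd he (by simp [assemble])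
      | true =>
        cases ms2 with
        | nil => exact absurd he (by simp [assemble])
        | cons m ms2 => exact absurd he (by simp [assemble])
  | cons b1 s1 ih =>
    intro ms1 s2 ms2 hl1 hl2 hv1 hv2 he
    cases s2 with
    | nil =>
      exfalso
      cases b1 with
      | false => exact absurd he (by simp [assemble])
      | true =>
        cases ms1 with
        | nil => exact absurd he (by simp [assemble])
        | cons m ms1 => exact absurd he (by simp [assemble])
    | cons b2 s2 =>
      cases b1 with
      | false =>
        cases b2 with
        | false =>
          have hl1' : ms1.length = s1.count true := by simpa using hl1
          have hl2' : ms2.length = s2.count true := by simpa using hl2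
          have he' : assemble s1 ms1 = assemble s2 ms2 := by
            have : H :: assemble s1 ms1 = H :: assemble s2 ms2 := he
            injection this
          obtain ⟨hs, hms⟩ := ih ms1 s2 ms2 hl1' hl2' hv1 hv2 he'
          exact ⟨by rw [hs], hms⟩
        | true =>
          exfalso
          cases ms2 with
          | nil => simp [← List.length_eq_zero_iff] at hl2
          | cons m ms2 =>
            have : H :: assemble s1 ms1 = (U :: (m ++ [D])) ++ assemble s2 ms2 := he
            simp at this
      | true =>
        cases ms1 with
        | nil => simp [List.count_cons] at hl1
        | cons m1 ms1 =>
          cases b2 with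
          | false =>
            exfalso
            have : (U :: (m1 ++ [D])) ++ assemble s1 ms1 = H :: assemble s2 ms2 := he
            simp at this
          | true =>
            cases ms2 with
            | nil => simp [List.count_cons] at hl2
            | cons m2 ms2 =>
              have hm1 : IsMotzkin m1 := hv1 m1 (by simp)
              have hm2 : IsMotzkin m2 := hv2 m2 (by simp)
              have he2 : m1 ++ D :: assemble s1 ms1 = m2 ++ D :: assemble s2 ms2 := by
                have : (U :: (m1 ++ [D])) ++ assemble s1 ms1
                    = (U :: (m2 ++ [D])) ++ assemble s2 ms2 := he
                simp only [List.cons_append, List.append_assoc, List.singleton_append,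
                  List.cons.injEq] at this
                exact this.2
              obtain ⟨hm, ht⟩ := motzkin_prefix_eq hm1 hm2 he2
              have hl1' : ms1.length = s1.count true := by simpa using hl1
              have hl2' : ms2.length = s2.count true := by simpa using hl2
              obtain ⟨hs, hms⟩ := ih ms1 s2 ms2 hl1' hl2'
                (fun m hm => hv1 m (by simp [hm])) (fun m hm => hv2 m (by simp [hm])) ht
              exact ⟨by rw [hs], by rw [hm, hms]⟩

lemma motzkin_parse : ∀ (n : ℕ) (mz : List Move), mz.length = n → IsMotzkin mz →
    ∃ (s : List Bool) (ms : List (List Move)), ms.length = s.count true ∧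
      (∀ m ∈ ms, IsMotzkin m) ∧ assemble s ms = mz := by
  intro n
  induction n using Nat.strong_induction_on with
  | _ n ih =>
    intro mz hlen hm
    cases hmz : mz with
    | nil => exact ⟨[], [], by simp, by simp, rfl⟩
    | cons x t =>
      subst hmz
      cases x with
      | H =>
        have ht : IsMotzkin t := by
          constructor
          · intro i
            have := hm.1 (i + 1)
            rw [heightAt_cons] at this
            simp only [Move.step] at this
            omega
          · have := hm.2
            rw [List.length_cons, heightAt_cons] at this
            simp only [Move.step] at this
            omega
        obtain ⟨s, ms, h1, h2, h3⟩ := ih t.length (by rw [← hlen]; simp) t rfl ht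
        exact ⟨false :: s, ms, by simpa using h1, h2, by show H :: assemble s ms = _; rw [h3]⟩
      | D =>
        exfalso
        have := hm.1 1
        have h1 : heightAt (D :: t) 1 = Move.step D + heightAt t 0 := heightAt_cons D t 0
        rw [h1, heightAt_zero] at this
        simp [Move.step] at this
      | U =>
        -- first return to zero
        have hex : ∃ j, 1 ≤ j ∧ heightAt (U :: t) j = 0 := by
          refine ⟨(U :: t).length, by simp, hm.2⟩
        classical
        set mz := U :: t with hmzdef
        let J := Nat.find hex
        have hJ : 1 ≤ J ∧ heightAt mz J = 0 := Nat.find_spec hex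
        have hJmin : ∀ j < J, ¬(1 ≤ j ∧ heightAt mz j = 0) := fun j hj => Nat.find_min hex hj
        have hJle : J ≤ mz.length := Nat.find_min' hex ⟨by simp [hmzdef], hm.2⟩
        have hpos : ∀ j, 1 ≤ j → j < J → 1 ≤ heightAt mz j := by
          intro j h1 h2
          have := hJmin j h2
          have := hm.1 j
          omega
        have h1U : heightAt mz 1 = 1 := by
          have : heightAt mz (0 + 1) = Move.step U + heightAt t 0 := heightAt_cons U t 0
          rw [heightAt_zero] at this
          simpa [Move.step] using this
        have hJ2 : 2 ≤ J := by
          rcases Nat.lt_or_ge J 2 with h | h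
          · interval_cases J
            · omega
            · omega
          · exact h
        have hJlt : J - 1 < mz.length := by omega
        have hgD : mz[J-1]? = some mz[J-1] := List.getElem?_eq_getElem hJlt
        have hstep : heightAt mz (J - 1 + 1) = heightAt mz (J - 1) + (mz[J-1]).step :=
          heightAt_getElem? mz (J - 1) _ hgD
        have hJ11 : J - 1 + 1 = J := by omega
        rw [hJ11] at hstep
        have hprev : 1 ≤ heightAt mz (J - 1) := hpos (J - 1) (by omega) (by omega)
        have hD : mz[J - 1] = D := by
          rcases hmv : mz[J-1] with _ | _ | _ <;> rw [hmv] at hstep <;>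
            simp [Move.step] at hstep <;> omega
        have hstep' : heightAt mz J = heightAt mz (J - 1) - 1 := by
          rw [hstep, hD]; simp [Move.step]; try omega
        -- the decomposition
        set m := t.take (J - 2) with hmdef
        set r := mz.drop J with hrdef
        have hlenm : m.length = J - 2 := by
          rw [hmdef, List.length_take]
          have : t.length = mz.length - 1 := by simp [hmzdef]
          omega
        have hdecomp : mz = U :: (m ++ (D :: r)) := by
          have h1 : t = m ++ t.drop (J - 2) := (List.take_append_drop (J - 2) t).symm
          have h2 : t.drop (J - 2) = mz.drop (J - 1) := by
            rw [hmzdef]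
            have : J - 1 = (J - 2) + 1 := by have := hJ2; omega
            rw [this]
            rfl
          have h3 : mz.drop (J - 1) = mz[J - 1] :: mz.drop J := by
            have hJeq : J - 1 + 1 = J := by have := hJ2; omega
            rw [List.drop_eq_getElem_cons hJlt, hJeq]
          rw [hmzdef]
          nth_rewrite 1 [h1]
          rw [h2, h3, hD]
      -- heights of m
        have hhm : ∀ i, heightAt m i = heightAt mz (min i (J - 2) + 1) - 1 := by
          intro i
          rw [hmdef, heightAt_take]
          have : heightAt mz (min i (J-2) + 1) = Move.step U + heightAt t (min i (J - 2)) :=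
            heightAt_cons U t _
          simp only [Move.step] at this
          omega
        have hmm : IsMotzkin m := by
          constructor
          · intro i
            rw [hhm i]
            have hmin : min i (J - 2) ≤ J - 2 := min_le_right _ _
            have := hpos (min i (J - 2) + 1) (by omega) (by omega)
            omega
          · rw [hhm m.length, hlenm]
            simp only [min_self]
            have : J - 2 + 1 = J - 1 := by omega
            rw [this]
            have := hJ.2
            omega
        have hrm : IsMotzkin r := by
          constructor
          · intro i
            rw [hrdef, heightAt_drop, hJ.2]
            have := hm.1 (J + i)
            omega
          · rw [hrdef, heightAt_drop, hJ.2, List.length_drop]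
            have : J + (mz.length - J) = mz.length := by omega
            rw [this, hm.2]
            ring
        have hrlen : r.length < n := by
          rw [hrdef, List.length_drop, ← hlen]
          omega
        obtain ⟨s2, ms2, h1, h2, h3⟩ := ih r.length hrlen r rfl hrm
        refine ⟨true :: s2, m :: ms2, by simpa using h1, ?_, ?_⟩
        · intro m' hm'
          rcases List.mem_cons.mp hm' with h | h
          · rw [h]; exact hmm
          · exact h2 m' h
        · show (U :: (m ++ [D])) ++ assemble s2 ms2 = mz
          rw [h3, hdecomp]
          simp

end MProof
namespace MProof
open Move List

/-- Pooled H-count of a list of paths. -/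
def pH (vs : List (List Move)) (k : ℤ) : ℕ := (vs.map (fun m => cH m k)).sum
/-- Pooled U-count of a list of paths. -/
def pU (vs : List (List Move)) (k : ℤ) : ℕ := (vs.map (fun m => cU m k)).sum

/-- Lists of `q` Motzkin paths with pooled profile `(f, p)`. -/
def MT (q : ℕ) (f p : ℕ → ℕ) : Set (List (List Move)) :=
  {vs | vs.length = q ∧ (∀ m ∈ vs, IsMotzkin m) ∧
    (∀ k : ℕ, pH vs (k : ℤ) = f k) ∧ (∀ k : ℕ, pU vs (k : ℤ) = p k)}

def mapAssemble : List (List Bool) → List (List Move) → List (List Move)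
  | [], _ => []
  | s :: ss, ms =>
      assemble s (ms.take (s.count true)) :: mapAssemble ss (ms.drop (s.count true))

def totT (ss : List (List Bool)) : ℕ := (ss.map (fun s => s.count true)).sum
def totF (ss : List (List Bool)) : ℕ := (ss.map (fun s => s.count false)).sum

/-- Shape data: `q` binary strings with `a` falses and `b` trues in total. -/
def Shapes (q a b : ℕ) : Set (List (List Bool)) :=
  {ss | ss.length = q ∧ totF ss = a ∧ totT ss = b}

@[simp] lemma totT_nil : totT [] = 0 := rfl
@[simp] lemma totF_nil : totF [] = 0 := rfl
lemma totT_cons (s : List Bool) (ss : List (List Bool)) :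
    totT (s :: ss) = s.count true + totT ss := by simp [totT]
lemma totF_cons (s : List Bool) (ss : List (List Bool)) :
    totF (s :: ss) = s.count false + totF ss := by simp [totF]
@[simp] lemma pH_nil (k : ℤ) : pH [] k = 0 := rfl
@[simp] lemma pU_nil (k : ℤ) : pU [] k = 0 := rfl
lemma pH_cons (v : List Move) (vs : List (List Move)) (k : ℤ) :
    pH (v :: vs) k = cH v k + pH vs k := by simp [pH]
lemma pU_cons (v : List Move) (vs : List (List Move)) (k : ℤ) :
    pU (v :: vs) k = cU v k + pU vs k := by simp [pU]
lemma pH_append (v w : List (List Move)) (k : ℤ) : pH (v ++ w) k = pH v k + pH w k := by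
  simp [pH]
lemma pU_append (v w : List (List Move)) (k : ℤ) : pU (v ++ w) k = pU v k + pU w k := by
  simp [pU]

lemma mapAssemble_length : ∀ (ss : List (List Bool)) (ms : List (List Move)),
    (mapAssemble ss ms).length = ss.length := by
  intro ss
  induction ss with
  | nil => intro ms; rfl
  | cons s ss ih => intro ms; simp [mapAssemble, ih]

lemma mapAssemble_motzkin : ∀ (ss : List (List Bool)) (ms : List (List Move)),
    (∀ m ∈ ms, IsMotzkin m) → ∀ v ∈ mapAssemble ss ms, IsMotzkin v := by
  intro ss
  induction ss with
  | nil => intro ms _ v hv; simp [mapAssemble] at hv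
  | cons s ss ih =>
    intro ms hval v hv
    rcases List.mem_cons.mp hv with h | h
    · rw [h]
      exact assemble_motzkin s _ (fun m hm => hval m (List.mem_of_mem_take hm))
    · exact ih _ (fun m hm => hval m (List.mem_of_mem_drop hm)) v h

lemma mapAssemble_pH : ∀ (ss : List (List Bool)) (ms : List (List Move)),
    ms.length = totT ss → (∀ m ∈ ms, IsMotzkin m) → ∀ k : ℤ,
    pH (mapAssemble ss ms) k = (if k = 0 then totF ss else 0) + pH ms (k - 1) := by
  intro ss
  induction ss with
  | nil =>
    intro ms hlen _ k
    simp only [totT_nil] at hlen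
    rw [List.length_eq_zero_iff] at hlen
    subst hlen
    simp [mapAssemble]
  | cons s ss ih =>
    intro ms hlen hval k
    rw [totT_cons] at hlen
    have htk : (ms.take (s.count true)).length = s.count true := by
      rw [List.length_take]
      omega
    have hdlen : (ms.drop (s.count true)).length = totT ss := by
      rw [List.length_drop]; omega
    show pH (assemble s (ms.take (s.count true)) :: mapAssemble ss (ms.drop (s.count true))) k = _
    rw [pH_cons, cH_assemble s _ htk (fun m hm => hval m (List.mem_of_mem_take hm)) k,
      ih _ hdlen (fun m hm => hval m (List.mem_of_mem_drop hm)) k, totF_cons]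
    have : pH ms (k - 1) = pH (ms.take (s.count true)) (k - 1)
        + pH (ms.drop (s.count true)) (k - 1) := by
      rw [← pH_append, List.take_append_drop]
    rw [this]
    show _ + (pH (ms.take (s.count true)) (k-1)) + _ = _
    by_cases hk : k = 0 <;> simp [hk] <;> ring

lemma mapAssemble_pU : ∀ (ss : List (List Bool)) (ms : List (List Move)),
    ms.length = totT ss → (∀ m ∈ ms, IsMotzkin m) → ∀ k : ℤ,
    pU (mapAssemble ss ms) k = (if k = 1 then totT ss else 0) + pU ms (k - 1) := by
  intro ss
  induction ss with
  | nil =>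
    intro ms hlen _ k
    simp only [totT_nil] at hlen
    rw [List.length_eq_zero_iff] at hlen
    subst hlen
    simp [mapAssemble]
  | cons s ss ih =>
    intro ms hlen hval k
    rw [totT_cons] at hlen
    have htk : (ms.take (s.count true)).length = s.count true := by
      rw [List.length_take]
      omega
    have hdlen : (ms.drop (s.count true)).length = totT ss := by
      rw [List.length_drop]; omega
    show pU (assemble s (ms.take (s.count true)) :: mapAssemble ss (ms.drop (s.count true))) k = _
    rw [pU_cons, cU_assemble s _ htk (fun m hm => hval m (List.mem_of_mem_take hm)) k,
      ih _ hdlen (fun m hm => hval m (List.mem_of_mem_drop hm)) k, totT_cons]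
    have : pU ms (k - 1) = pU (ms.take (s.count true)) (k - 1)
        + pU (ms.drop (s.count true)) (k - 1) := by
      rw [← pU_append, List.take_append_drop]
    rw [this]
    show _ + (pU (ms.take (s.count true)) (k-1)) + _ = _
    by_cases hk : k = 1 <;> simp [hk] <;> ring

lemma pH_neg {ms : List (List Move)} (h : ∀ m ∈ ms, IsMotzkin m) {k : ℤ} (hk : k < 0) :
    pH ms k = 0 := by
  rw [pH, List.sum_eq_zero_iff]
  intro x hx
  simp only [List.mem_map] at hx
  obtain ⟨m, hm, rfl⟩ := hx
  exact cH_neg (h m hm).nn hk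

lemma pU_nonpos {ms : List (List Move)} (h : ∀ m ∈ ms, IsMotzkin m) {k : ℤ} (hk : k ≤ 0) :
    pU ms k = 0 := by
  rw [pU, List.sum_eq_zero_iff]
  intro x hx
  simp only [List.mem_map] at hx
  obtain ⟨m, hm, rfl⟩ := hx
  exact cU_nonpos (h m hm).nn hk

/-- shifted flat profile. -/
def shf (f : ℕ → ℕ) : ℕ → ℕ := fun k => f (k + 1)
/-- shifted peak profile (zeroed at level 0). -/
def shp (p : ℕ → ℕ) : ℕ → ℕ := fun k => if k = 0 then 0 else p (k + 1)

/-- The step bijection: `Φ` maps `Shapes q (f 0) (p 1) ×ˢ MT (p 1) (shf f) (shp p)`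
bijectively onto `MT q f p`. -/
lemma step_image (q : ℕ) (f p : ℕ → ℕ) (hp0 : p 0 = 0) :
    (fun x : List (List Bool) × List (List Move) => mapAssemble x.1 x.2) ''
      (Shapes q (f 0) (p 1) ×ˢ MT (p 1) (shf f) (shp p)) = MT q f p := by
  ext vs
  constructor
  · rintro ⟨⟨ss, ms⟩, ⟨⟨hq, hF, hT⟩, ⟨hlen, hval, hpH, hpU⟩⟩, rfl⟩
    have hlen' : ms.length = totT ss := by rw [hlen, hT]
    refine ⟨by rw [mapAssemble_length, hq], mapAssemble_motzkin ss ms hval, ?_, ?_⟩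
    · intro k
      rw [mapAssemble_pH ss ms hlen' hval]
      cases k with
      | zero =>
        rw [pH_neg hval (by norm_num)]
        simp [hF]
      | succ k' =>
        have h1 : ((k' + 1 : ℕ) : ℤ) - 1 = (k' : ℤ) := by push_cast; ring
        rw [h1, hpH k', if_neg (show ¬((k' + 1 : ℕ) : ℤ) = 0 from by positivity)]
        simp [shf]
    · intro k
      rw [mapAssemble_pU ss ms hlen' hval]
      match k with
      | 0 =>
        rw [pU_nonpos hval (by norm_num)]
        simp [hp0]
      | 1 =>
        have : ((1 : ℕ) : ℤ) - 1 = ((0 : ℕ) : ℤ) := by norm_num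
        rw [this, hpU 0]
        simp [hT, shp]
      | (k' + 2) =>
        have h1 : ((k' + 2 : ℕ) : ℤ) - 1 = ((k' + 1 : ℕ) : ℤ) := by push_cast; ring
        rw [h1, hpU (k' + 1), if_neg (show ¬((k' + 2 : ℕ) : ℤ) = 1 from by push_cast; omega)]
        simp [shp]
  · rintro ⟨hq, hval, hpH, hpU⟩
    -- parse each component
    have hparse : ∀ (vs : List (List Move)), (∀ m ∈ vs, IsMotzkin m) →
        ∃ ss ms, ss.length = vs.length ∧ ms.length = totT ss ∧ (∀ m ∈ ms, IsMotzkin m) ∧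
          mapAssemble ss ms = vs := by
      intro vs
      induction vs with
      | nil => intro _; exact ⟨[], [], rfl, by simp, by simp, rfl⟩
      | cons v vs ih =>
        intro hv
        obtain ⟨ss, ms, h1, h2, h3, h4⟩ := ih (fun m hm => hv m (by simp [hm]))
        obtain ⟨s, msv, hsv1, hsv2, hsv3⟩ :=
          motzkin_parse v.length v rfl (hv v (by simp))
        refine ⟨s :: ss, msv ++ ms, by simp [h1], ?_, ?_, ?_⟩
        · rw [totT_cons, List.length_append]
          omega
        · intro m hm
          rcases List.mem_append.mp hm with h | h
          · exact hsv2 m h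
          · exact h3 m h
        · show assemble s ((msv ++ ms).take (s.count true))
            :: mapAssemble ss ((msv ++ ms).drop (s.count true)) = v :: vs
          rw [List.take_left' hsv1, List.drop_left' hsv1, hsv3, h4]
    obtain ⟨ss, ms, h1, h2, h3, h4⟩ := hparse vs hval
    have hT : totT ss = p 1 := by
      have := hpU 1
      rw [← h4, mapAssemble_pU ss ms h2 h3] at this
      rw [show ((1:ℕ):ℤ) - 1 = 0 from by norm_num, pU_nonpos h3 le_rfl] at this
      simp at this
      omega
    refine ⟨⟨ss, ms⟩, ⟨⟨by rw [h1, hq], ?_, hT⟩, ⟨?_, h3, ?_, ?_⟩⟩, h4⟩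
    · -- totF ss = f 0
      show totF ss = f 0
      have := hpH 0
      rw [← h4, mapAssemble_pH ss ms h2 h3, pH_neg h3 (by norm_num)] at this
      simp at this
      omega
    · -- ms.length = p 1
      show ms.length = p 1
      omega
    · -- pooled H of ms
      intro k
      show pH ms (k : ℤ) = shf f k
      have := hpH (k + 1)
      rw [← h4, mapAssemble_pH ss ms h2 h3] at this
      rw [show ((k+1:ℕ):ℤ) = (k:ℤ) + 1 from by push_cast; ring] at this
      have hne : (k:ℤ) + 1 ≠ 0 := by positivity
      rw [if_neg hne] at this
      simpa [shf] using this
    · -- pooled U of ms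
      intro k
      show pU ms (k : ℤ) = shp p k
      cases k with
      | zero =>
        have h0 : pU ms ((0:ℕ):ℤ) = 0 := by
          have : ((0:ℕ):ℤ) = 0 := by norm_num
          rw [this]
          exact pU_nonpos h3 le_rfl
        rw [h0]
        simp [shp]
      | succ k' =>
        have := hpU (k' + 2)
        rw [← h4, mapAssemble_pU ss ms h2 h3] at this
        rw [show ((k'+2:ℕ):ℤ) = ((k'+1:ℕ):ℤ) + 1 from by push_cast; ring] at this
        have hne : ((k'+1:ℕ):ℤ) + 1 ≠ 1 := by push_cast; omega
        rw [if_neg hne] at this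
        simp only [add_sub_cancel_right, zero_add] at this
        rw [this]
        simp [shp]

lemma step_injOn (q : ℕ) (f p : ℕ → ℕ) :
    Set.InjOn (fun x : List (List Bool) × List (List Move) => mapAssemble x.1 x.2)
      (Shapes q (f 0) (p 1) ×ˢ MT (p 1) (shf f) (shp p)) := by
  have key : ∀ (ss1 : List (List Bool)) (ms1 : List (List Move)) ss2 ms2,
      ms1.length = totT ss1 → ms2.length = totT ss2 →
      (∀ m ∈ ms1, IsMotzkin m) → (∀ m ∈ ms2, IsMotzkin m) →
      mapAssemble ss1 ms1 = mapAssemble ss2 ms2 → ss1 = ss2 ∧ ms1 = ms2 := by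
    intro ss1
    induction ss1 with
    | nil =>
      intro ms1 ss2 ms2 hl1 hl2 _ _ he
      cases ss2 with
      | nil =>
        simp only [totT_nil] at hl1 hl2
        rw [List.length_eq_zero_iff] at hl1 hl2
        rw [hl1, hl2]
        exact ⟨rfl, rfl⟩
      | cons s ss2 => exact absurd he (by simp [mapAssemble])
    | cons s1 ss1 ih =>
      intro ms1 ss2 ms2 hl1 hl2 hv1 hv2 he
      cases ss2 with
      | nil => exact absurd he (by simp [mapAssemble])
      | cons s2 ss2 =>
        rw [totT_cons] at hl1 hl2
        have ht1 : (ms1.take (s1.count true)).length = s1.count true := by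
          rw [List.length_take]; omega
        have ht2 : (ms2.take (s2.count true)).length = s2.count true := by
          rw [List.length_take]; omega
        have hd1 : (ms1.drop (s1.count true)).length = totT ss1 := by
          rw [List.length_drop]; omega
        have hd2 : (ms2.drop (s2.count true)).length = totT ss2 := by
          rw [List.length_drop]; omega
        have he' : assemble s1 (ms1.take (s1.count true))
              :: mapAssemble ss1 (ms1.drop (s1.count true))
            = assemble s2 (ms2.take (s2.count true))
              :: mapAssemble ss2 (ms2.drop (s2.count true)) := he
        have hhead := (List.cons.injEq _ _ _ _ ▸ he').1
        have htail := (List.cons.injEq _ _ _ _ ▸ he').2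
        obtain ⟨hs, hmt⟩ := assemble_inj s1 _ s2 _ ht1 ht2
          (fun m hm => hv1 m (List.mem_of_mem_take hm))
          (fun m hm => hv2 m (List.mem_of_mem_take hm)) hhead
        obtain ⟨hss, hmd⟩ := ih _ ss2 _ hd1 hd2
          (fun m hm => hv1 m (List.mem_of_mem_drop hm))
          (fun m hm => hv2 m (List.mem_of_mem_drop hm)) htail
        refine ⟨by rw [hs, hss], ?_⟩
        have : ms1 = ms1.take (s1.count true) ++ ms1.drop (s1.count true) :=
          (List.take_append_drop _ _).symm
        rw [this, hmt, hmd, List.take_append_drop]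
  rintro ⟨ss1, ms1⟩ ⟨⟨hq1, hF1, hT1⟩, ⟨hlen1, hval1, _, _⟩⟩
    ⟨ss2, ms2⟩ ⟨⟨hq2, hF2, hT2⟩, ⟨hlen2, hval2, _, _⟩⟩ he
  obtain ⟨h1, h2⟩ := key ss1 ms1 ss2 ms2 (by simp_all) (by simp_all) hval1 hval2 he
  simp [h1, h2]

lemma ncard_prod {α β : Type*} (s : Set α) (t : Set β) :
    (s ×ˢ t).ncard = s.ncard * t.ncard := by
  rw [← Nat.card_coe_set_eq, ← Nat.card_coe_set_eq, ← Nat.card_coe_set_eq,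
    Nat.card_congr (Equiv.Set.prod s t), Nat.card_prod]

lemma MT_step (q : ℕ) (f p : ℕ → ℕ) (hp0 : p 0 = 0) :
    (MT q f p).ncard
      = (Shapes q (f 0) (p 1)).ncard * (MT (p 1) (shf f) (shp p)).ncard := by
  rw [← step_image q f p hp0, Set.ncard_image_of_injOn (step_injOn q f p), ncard_prod]

end MProof
namespace MProof
open Move List

lemma heightAt_replicate (l i : ℕ) : heightAt (List.replicate l H) i = 0 := by
  rw [heightAt, List.take_replicate, List.map_replicate]
  simp [Move.step]

lemma motzkin_replicate (l : ℕ) : IsMotzkin (List.replicate l H) := by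
  constructor
  · intro i; rw [heightAt_replicate]
  · rw [heightAt_replicate]

lemma cH_replicate (l : ℕ) (k : ℤ) :
    cH (List.replicate l H) k = if k = 0 then l else 0 := by
  induction l with
  | zero => simp [cH]
  | succ n ih =>
    rw [List.replicate_succ]
    show (if k = 0 then 1 else 0) + cH (List.replicate n H) k = _
    rw [ih]
    split_ifs <;> omega

lemma cU_replicate (l : ℕ) (k : ℤ) : cU (List.replicate l H) k = 0 := by
  induction l with
  | zero => simp [cU]
  | succ n ih =>
    rw [List.replicate_succ]
    show cU (List.replicate n H) k = 0
    exact ih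

lemma motzkin_of_cons_H {t : List Move} (h : IsMotzkin (H :: t)) : IsMotzkin t := by
  constructor
  · intro i
    have := h.1 (i + 1)
    rw [heightAt_cons] at this
    simp only [Move.step] at this
    omega
  · have := h.2
    rw [List.length_cons, heightAt_cons] at this
    simp only [Move.step] at this
    omega

lemma eq_replicate_of_no_U : ∀ (m : List Move), IsMotzkin m → (∀ k : ℕ, cU m (k : ℤ) = 0) →
    m = List.replicate m.length H := by
  intro m
  induction m with
  | nil => intro _ _; simp
  | cons x t ih =>
    intro hm hU
    cases x with
    | U =>
      exfalso
      have := hU 1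
      show False
      rw [show ((1:ℕ):ℤ) = 1 from rfl] at this
      have h2 : cU (U :: t) 1 = 1 + cU t 0 := by
        show (if (1:ℤ) = 1 then 1 else 0) + cU t (1 - 1) = _
        norm_num
      rw [h2] at this
      omega
    | D =>
      exfalso
      have := hm.1 1
      have h1 : heightAt (D :: t) 1 = Move.step D + heightAt t 0 := heightAt_cons D t 0
      rw [h1, heightAt_zero] at this
      simp [Move.step] at this
    | H =>
      have ht : IsMotzkin t := motzkin_of_cons_H hm
      have htU : ∀ k : ℕ, cU t (k : ℤ) = 0 := fun k => hU k
      rw [List.length_cons, List.replicate_succ]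
      rw [← ih ht htU]

/-- Compositions of `m` into `q` nonnegative parts, as a set of lists. -/
def Comps (q m : ℕ) : Set (List ℕ) := {ls | ls.length = q ∧ ls.sum = m}

lemma MT_base (q : ℕ) (f p : ℕ → ℕ) (hf : ∀ k, 0 < k → f k = 0) (hp : ∀ k, p k = 0) :
    (MT q f p).ncard = (Comps q (f 0)).ncard := by
  have himage : (fun ls : List ℕ => ls.map (fun l => List.replicate l H)) '' Comps q (f 0)
      = MT q f p := by
    ext vs
    constructor
    · rintro ⟨ls, ⟨hlen, hsum⟩, rfl⟩
      refine ⟨by simp [hlen], ?_, ?_, ?_⟩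
      · intro m hm
        simp only [List.mem_map] at hm
        obtain ⟨l, _, rfl⟩ := hm
        exact motzkin_replicate l
      · intro k
        rw [pH, List.map_map]
        cases k with
        | zero =>
          have : ∀ l ∈ ls, ((fun m => cH m ((0:ℕ):ℤ)) ∘ fun l => List.replicate l H) l = l := by
            intro l _
            simp only [Function.comp]
            rw [cH_replicate]
            norm_num
          rw [List.map_congr_left this]
          simpa using hsum
        | succ k' =>
          have : ∀ l ∈ ls, ((fun m => cH m ((k'+1:ℕ):ℤ)) ∘ fun l => List.replicate l H) l = 0 := by
            intro l _
            simp only [Function.comp]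
            rw [cH_replicate, if_neg (by positivity)]
          rw [List.map_congr_left this]
          rw [hf (k' + 1) (by omega)]
          simp
      · intro k
        rw [pU, List.map_map, hp k]
        have : ∀ l ∈ ls, ((fun m => cU m (k:ℤ)) ∘ fun l => List.replicate l H) l = 0 := by
          intro l _
          simp only [Function.comp]
          rw [cU_replicate]
        rw [List.map_congr_left this]
        simp
    · rintro ⟨hlen, hval, hpH, hpU⟩
      refine ⟨vs.map List.length, ⟨by simp [hlen], ?_⟩, ?_⟩
      · -- sum of lengths = f 0
        have h0 := hpH 0
        rw [pH] at h0
        have : ∀ m ∈ vs, cH m ((0:ℕ):ℤ) = m.length := by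
          intro m hm
          have hrep := eq_replicate_of_no_U m (hval m hm) (fun k => by
            have := hpU k
            rw [pU, hp k, List.sum_eq_zero_iff] at this
            exact this _ (List.mem_map_of_mem hm))
          conv_lhs => rw [hrep]
          rw [cH_replicate]
          norm_num
        rw [List.map_congr_left this] at h0
        rw [← h0]
      · -- map replicate of map length = vs
        show List.map (fun l => List.replicate l H) (vs.map List.length) = vs
        rw [List.map_map]
        have : ∀ m ∈ vs, ((fun l => List.replicate l H) ∘ List.length) m = m := by
          intro m hm
          simp only [Function.comp]
          exact (eq_replicate_of_no_U m (hval m hm) (fun k => by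
            have := hpU k
            rw [pU, hp k, List.sum_eq_zero_iff] at this
            exact this _ (List.mem_map_of_mem hm))).symm
        rw [List.map_congr_left this]
        exact List.map_id' vs
  rw [← himage, Set.ncard_image_of_injOn]
  have hinj : Function.Injective (fun ls : List ℕ => ls.map (fun l => List.replicate l H)) := by
    apply List.map_injective_iff.mpr
    intro a b hab
    have := congrArg List.length hab
    simpa using this
  exact hinj.injOn

/-- Finset of compositions. -/
def compF : ℕ → ℕ → Finset (List ℕ)
  | 0, m => if m = 0 then {[]} else ∅
  | q+1, m => (Finset.range (m+1)).biUnion (fun x => (compF q (m-x)).image (fun ls => x :: ls))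

lemma mem_compF : ∀ (q m : ℕ) (ls : List ℕ), ls ∈ compF q m ↔ ls.length = q ∧ ls.sum = m := by
  intro q
  induction q with
  | zero =>
    intro m ls
    show ls ∈ (if m = 0 then ({[]} : Finset (List ℕ)) else ∅) ↔ _
    split_ifs with hm
    · subst hm
      simp [List.length_eq_zero_iff]
      intro h
      subst h
      simp
    · simp
      intro h
      subst h
      simp
      omega
  | succ q ih =>
    intro m ls
    show ls ∈ (Finset.range (m+1)).biUnion _ ↔ _
    rw [Finset.mem_biUnion]
    constructor
    · rintro ⟨x, hx, hls⟩
      rw [Finset.mem_image] at hls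
      obtain ⟨t, ht, rfl⟩ := hls
      rw [ih] at ht
      rw [Finset.mem_range] at hx
      simp only [List.length_cons, List.sum_cons]
      omega
    · intro ⟨hlen, hsum⟩
      cases ls with
      | nil => simp at hlen
      | cons x t =>
        simp only [List.length_cons, List.sum_cons] at hlen hsum
        refine ⟨x, Finset.mem_range.mpr (by omega), ?_⟩
        rw [Finset.mem_image]
        exact ⟨t, (ih (m - x) t).mpr ⟨by omega, by omega⟩, rfl⟩

lemma card_compF_succ (q m : ℕ) :
    (compF (q+1) m).card = ∑ x ∈ Finset.range (m+1), (compF q (m-x)).card := by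
  show ((Finset.range (m+1)).biUnion _).card = _
  rw [Finset.card_biUnion]
  · refine Finset.sum_congr rfl fun x _ => ?_
    rw [Finset.card_image_of_injective]
    intro a b hab
    injection hab
  · intro x _ y _ hxy
    rw [Function.onFun, Finset.disjoint_left]
    intro ls h1 h2
    rw [Finset.mem_image] at h1 h2
    obtain ⟨t1, _, he1⟩ := h1
    obtain ⟨t2, _, he2⟩ := h2
    rw [← he2] at he1
    injection he1 with h _
    exact hxy h

lemma card_compF (q m : ℕ) (hq : 1 ≤ q) : (compF q m).card = (m + q - 1).choose (q - 1) := by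
  induction q, hq using Nat.le_induction generalizing m with
  | base =>
    rw [card_compF_succ]
    have : ∀ x ∈ Finset.range (m+1), (compF 0 (m-x)).card = if x = m then 1 else 0 := by
      intro x hx
      rw [Finset.mem_range] at hx
      show (if m - x = 0 then ({[]} : Finset (List ℕ)) else ∅).card = _
      split_ifs with h1 h2 h2 <;> simp_all <;> omega
    rw [Finset.sum_congr rfl this, Finset.sum_ite_eq' (Finset.range (m+1)) m (fun _ => 1),
      if_pos (Finset.mem_range.mpr (by omega))]
    simp
  | succ q hq ih =>
    rw [card_compF_succ, Finset.sum_congr rfl (fun x _ => ih (m - x))]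
    have hrefl := Finset.sum_range_reflect (fun x => (x + q - 1).choose (q - 1)) (m + 1)
    simp only [Nat.add_sub_cancel] at hrefl
    rw [hrefl]
    have : ∀ x ∈ Finset.range (m + 1), (x + q - 1).choose (q - 1) = (x + (q-1)).choose (q-1) := by
      intro x _
      congr 1
      omega
    rw [Finset.sum_congr rfl this, Nat.sum_range_add_choose m (q-1)]
    congr 1 <;> omega

/-- Finset of binary strings of length `n` with `b` trues. -/
def strF : ℕ → ℕ → Finset (List Bool)
  | 0, b => if b = 0 then {[]} else ∅
  | n+1, b => (strF n b).image (fun w => false :: w)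
      ∪ (if b = 0 then ∅ else (strF n (b-1)).image (fun w => true :: w))

lemma mem_strF : ∀ (n b : ℕ) (w : List Bool),
    w ∈ strF n b ↔ w.length = n ∧ w.count true = b := by
  intro n
  induction n with
  | zero =>
    intro b w
    show w ∈ (if b = 0 then ({[]} : Finset (List Bool)) else ∅) ↔ _
    split_ifs with hb
    · subst hb
      simp [List.length_eq_zero_iff]
      intro h; subst h; simp
    · simp
      intro h
      subst h
      simp
      omega
  | succ n ih =>
    intro b w
    show w ∈ _ ∪ _ ↔ _
    rw [Finset.mem_union]
    constructor
    · rintro (h | h)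
      · rw [Finset.mem_image] at h
        obtain ⟨t, ht, rfl⟩ := h
        rw [ih] at ht
        simp [ht.1, ht.2]
      · split_ifs at h with hb
        · simp at h
        · rw [Finset.mem_image] at h
          obtain ⟨t, ht, rfl⟩ := h
          rw [ih] at ht
          simp [ht.1, ht.2]
          omega
    · intro ⟨hlen, hcount⟩
      cases w with
      | nil => simp at hlen
      | cons x t =>
        simp only [List.length_cons] at hlen
        cases x with
        | false =>
          left
          rw [Finset.mem_image]
          refine ⟨t, (ih b t).mpr ⟨by omega, ?_⟩, rfl⟩
          simpa using hcount
        | true =>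
          right
          have hb : b ≠ 0 := by
            simp at hcount
            omega
          rw [if_neg hb, Finset.mem_image]
          refine ⟨t, (ih (b-1) t).mpr ⟨by omega, ?_⟩, rfl⟩
          simp at hcount
          omega

lemma card_strF : ∀ (n b : ℕ), (strF n b).card = n.choose b := by
  intro n
  induction n with
  | zero =>
    intro b
    show (if b = 0 then ({[]} : Finset (List Bool)) else ∅).card = _
    split_ifs with hb
    · subst hb; simp
    · rw [Nat.choose_eq_zero_of_lt (by omega)]
      simp
  | succ n ih =>
    intro b
    show ((strF n b).image _ ∪ _).card = _
    rw [Finset.card_union_of_disjoint]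
    · rw [Finset.card_image_of_injective _ (fun a b h => by injection h)]
      cases b with
      | zero =>
        rw [if_pos rfl]
        simp [ih]
      | succ b' =>
        rw [if_neg (by omega), Finset.card_image_of_injective _ (fun a b h => by injection h),
          ih, ih]
        show n.choose (b' + 1) + n.choose (b' + 1 - 1) = (n+1).choose (b'+1)
        rw [Nat.choose_succ_succ' n b', Nat.add_sub_cancel]
        exact Nat.add_comm _ _
    · rw [Finset.disjoint_left]
      intro w h1 h2
      rw [Finset.mem_image] at h1
      obtain ⟨t, _, rfl⟩ := h1
      split_ifs at h2 with hb
      · simp at h2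
      · rw [Finset.mem_image] at h2
        obtain ⟨t2, _, he⟩ := h2
        simp at he

/-- Binary strings of length `n` with `b` trues, as a set. -/
def Strs (n b : ℕ) : Set (List Bool) := {w | w.length = n ∧ w.count true = b}

lemma ncard_Comps (q m : ℕ) (hq : 1 ≤ q) : (Comps q m).ncard = (m + q - 1).choose (q - 1) := by
  have : Comps q m = ↑(compF q m) := by
    ext ls
    rw [Finset.mem_coe, mem_compF]
    rfl
  rw [this, Set.ncard_coe_finset, card_compF q m hq]

lemma ncard_Strs (n b : ℕ) : (Strs n b).ncard = n.choose b := by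
  have : Strs n b = ↑(strF n b) := by
    ext w
    rw [Finset.mem_coe, mem_strF]
    rfl
  rw [this, Set.ncard_coe_finset, card_strF]

end MProof
namespace MProof
open Move List

def splitL : List ℕ → List Bool → List (List Bool)
  | [], _ => []
  | l :: ls, w => w.take l :: splitL ls (w.drop l)

lemma count_tf (w : List Bool) : w.count true + w.count false = w.length := by
  induction w with
  | nil => simp
  | cons x t ih => cases x <;> simp [List.count_cons] <;> omega

lemma splitL_length : ∀ (ls : List ℕ) (w : List Bool), (splitL ls w).length = ls.length := by
  intro ls
  induction ls with
  | nil => intro w; rfl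
  | cons l ls ih => intro w; simp [splitL, ih]

lemma splitL_totT : ∀ (ls : List ℕ) (w : List Bool), w.length ≤ ls.sum →
    totT (splitL ls w) = w.count true := by
  intro ls
  induction ls with
  | nil =>
    intro w hw
    simp only [List.sum_nil, Nat.le_zero] at hw
    rw [List.length_eq_zero_iff] at hw
    subst hw
    rfl
  | cons l ls ih =>
    intro w hw
    show totT (w.take l :: splitL ls (w.drop l)) = _
    rw [totT_cons, ih (w.drop l) (by rw [List.length_drop]; simp at hw; omega)]
    conv_rhs => rw [← List.take_append_drop l w]
    rw [List.count_append]

lemma splitL_totF : ∀ (ls : List ℕ) (w : List Bool), w.length ≤ ls.sum →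
    totF (splitL ls w) = w.count false := by
  intro ls
  induction ls with
  | nil =>
    intro w hw
    simp only [List.sum_nil, Nat.le_zero] at hw
    rw [List.length_eq_zero_iff] at hw
    subst hw
    rfl
  | cons l ls ih =>
    intro w hw
    show totF (w.take l :: splitL ls (w.drop l)) = _
    rw [totF_cons, ih (w.drop l) (by rw [List.length_drop]; simp at hw; omega)]
    conv_rhs => rw [← List.take_append_drop l w]
    rw [List.count_append]

lemma splitL_inj : ∀ (ls1 : List ℕ) (w1 : List Bool) (ls2 : List ℕ) (w2 : List Bool),
    ls1.sum = w1.length → ls2.sum = w2.length → splitL ls1 w1 = splitL ls2 w2 →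
    ls1 = ls2 ∧ w1 = w2 := by
  intro ls1
  induction ls1 with
  | nil =>
    intro w1 ls2 w2 h1 h2 he
    cases ls2 with
    | nil =>
      simp only [List.sum_nil] at h1 h2
      have e1 : w1 = [] := by rw [← List.length_eq_zero_iff]; omega
      have e2 : w2 = [] := by rw [← List.length_eq_zero_iff]; omega
      rw [e1, e2]
      exact ⟨rfl, rfl⟩
    | cons l2 ls2 => exact absurd he (by simp [splitL])
  | cons l1 ls1 ih =>
    intro w1 ls2 w2 h1 h2 he
    cases ls2 with
    | nil => exact absurd he (by simp [splitL])
    | cons l2 ls2 =>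
      simp only [List.sum_cons] at h1 h2
      have he' : w1.take l1 :: splitL ls1 (w1.drop l1)
          = w2.take l2 :: splitL ls2 (w2.drop l2) := he
      have hhead := (List.cons.injEq _ _ _ _ ▸ he').1
      have htail := (List.cons.injEq _ _ _ _ ▸ he').2
      have hl : l1 = l2 := by
        have e1 := congrArg List.length hhead
        rw [List.length_take, List.length_take] at e1
        omega
      obtain ⟨hls, hw⟩ := ih (w1.drop l1) ls2 (w2.drop l2)
        (by rw [List.length_drop]; omega) (by rw [List.length_drop]; omega) htail
      refine ⟨by rw [hl, hls], ?_⟩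
      rw [← List.take_append_drop l1 w1, hhead, hw, List.take_append_drop]

lemma splitL_exists : ∀ (ss : List (List Bool)), ∃ (ls : List ℕ) (w : List Bool),
    ls.length = ss.length ∧ ls.sum = w.length ∧ w.count true = totT ss ∧
    w.count false = totF ss ∧ splitL ls w = ss := by
  intro ss
  induction ss with
  | nil => exact ⟨[], [], rfl, rfl, rfl, rfl, rfl⟩
  | cons s ss ih =>
    obtain ⟨ls, w, h1, h2, h3, h4, h5⟩ := ih
    refine ⟨s.length :: ls, s ++ w, by simp [h1], ?_, ?_, ?_, ?_⟩
    · simp only [List.sum_cons, List.length_append]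
      omega
    · rw [List.count_append, totT_cons, h3]
    · rw [List.count_append, totF_cons, h4]
    · show (s ++ w).take s.length :: splitL ls ((s ++ w).drop s.length) = s :: ss
      rw [List.take_left' rfl, List.drop_left' rfl, h5]

lemma shapes_ncard (q a b : ℕ) :
    (Shapes q a b).ncard = (Comps q (a + b)).ncard * (Strs (a + b) b).ncard := by
  have himage : (fun x : List ℕ × List Bool => splitL x.1 x.2) ''
      (Comps q (a + b) ×ˢ Strs (a + b) b) = Shapes q a b := by
    ext ss
    constructor
    · rintro ⟨⟨ls, w⟩, ⟨⟨hl, hs⟩, ⟨hwl, hwc⟩⟩, rfl⟩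
      have hl' : ls.length = q := hl
      have hs' : ls.sum = a + b := hs
      have hwl' : w.length = a + b := hwl
      have hwc' : w.count true = b := hwc
      show splitL ls w ∈ Shapes q a b
      refine ⟨by rw [splitL_length, hl'], ?_, ?_⟩
      · rw [splitL_totF ls w (by omega)]
        have := count_tf w
        omega
      · rw [splitL_totT ls w (by omega), hwc']
    · intro ⟨hq, hF, hT⟩
      obtain ⟨ls, w, h1, h2, h3, h4, h5⟩ := splitL_exists ss
      have hwlen : w.length = a + b := by
        have := count_tf w
        omega
      exact ⟨⟨ls, w⟩, ⟨⟨show ls.length = q by omega, show ls.sum = a + b by omega⟩,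
        ⟨show w.length = a + b by omega, show w.count true = b by omega⟩⟩, h5⟩
  have hinj : Set.InjOn (fun x : List ℕ × List Bool => splitL x.1 x.2)
      (Comps q (a + b) ×ˢ Strs (a + b) b) := by
    rintro ⟨ls1, w1⟩ ⟨⟨hl1, hs1⟩, ⟨hwl1, _⟩⟩ ⟨ls2, w2⟩ ⟨⟨hl2, hs2⟩, ⟨hwl2, _⟩⟩ he
    have hs1' : ls1.sum = a + b := hs1
    have hwl1' : w1.length = a + b := hwl1
    have hs2' : ls2.sum = a + b := hs2
    have hwl2' : w2.length = a + b := hwl2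
    obtain ⟨e1, e2⟩ := splitL_inj ls1 w1 ls2 w2 (by omega) (by omega) he
    simp [e1, e2]
  rw [← himage, Set.ncard_image_of_injOn hinj, ncard_prod]

/-- The product formula, defined recursively layer by layer. -/
def Gfun : ℕ → ℕ → (ℕ → ℕ) → (ℕ → ℕ) → ℕ
  | 0, q, f, _ => (f 0 + q - 1).choose (q - 1)
  | h+1, q, f, p => ((f 0 + p 1 + q - 1).choose (q - 1)) * ((f 0 + p 1).choose (f 0))
      * Gfun h (p 1) (shf f) (shp p)

/-- MAIN counting lemma. -/
lemma MT_count : ∀ (h : ℕ) (f p : ℕ → ℕ) (q : ℕ), 1 ≤ q →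
    (∀ i, 1 ≤ i → i ≤ h → 0 < p i) → p 0 = 0 → (∀ i, h < i → p i = 0) →
    (∀ i, h < i → f i = 0) → (MT q f p).ncard = Gfun h q f p := by
  intro h
  induction h with
  | zero =>
    intro f p q hq hpos hp0 hps hfs
    have hp : ∀ k, p k = 0 := by
      intro k
      cases k with
      | zero => exact hp0
      | succ k' => exact hps _ (by omega)
    rw [MT_base q f p (fun k hk => hfs k hk) hp, ncard_Comps q (f 0) hq]
    rfl
  | succ h ih =>
    intro f p q hq hpos hp0 hps hfs
    have hp1 : 1 ≤ p 1 := hpos 1 le_rfl (by omega)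
    rw [MT_step q f p hp0, shapes_ncard, ncard_Comps q (f 0 + p 1) hq, ncard_Strs]
    rw [ih (shf f) (shp p) (p 1) hp1 ?_ (by simp [shp]) ?_ ?_]
    · show _ = ((f 0 + p 1 + q - 1).choose (q - 1)) * ((f 0 + p 1).choose (f 0))
        * Gfun h (p 1) (shf f) (shp p)
      have : (f 0 + p 1).choose (p 1) = (f 0 + p 1).choose (f 0) := by
        rw [← Nat.choose_symm (by omega : p 1 ≤ f 0 + p 1)]
        congr 1
        omega
      rw [this]
    · intro i h1 h2
      show 0 < shp p i
      rw [shp, if_neg (by omega)]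
      exact hpos (i + 1) (by omega) (by omega)
    · intro i hi
      show shp p i = 0
      rw [shp]
      split_ifs with h0
      · rfl
      · exact hps (i + 1) (by omega)
    · intro i hi
      exact hfs (i + 1) (by omega)

end MProof
namespace MProof
open Move List

lemma Gfun_closed : ∀ (h : ℕ) (f p : ℕ → ℕ) (q : ℕ), 1 ≤ q → p 0 = 0 →
    (∀ i, 1 ≤ i → i ≤ h → 0 < p i) → (∀ i, h < i → p i = 0) →
    Gfun h q f p = (f h + p h - 1).choose (p h - 1)
      * (∏ i ∈ Finset.Icc 1 (h - 1),
          (f i + p (i+1)).choose (f i) * (f i + p (i+1) + p i - 1).choose (p i - 1))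
      * ((f 0 + p 1 + q - 1).choose (q - 1) * (f 0 + p 1).choose (f 0)) := by
  intro h
  induction h with
  | zero =>
    intro f p q hq hp0 hpos hps
    have hp1 : p 1 = 0 := hps 1 (by omega)
    show (f 0 + q - 1).choose (q - 1) = _
    rw [hp0, hp1]
    rw [show Finset.Icc 1 (0 - 1) = (∅ : Finset ℕ) from Finset.Icc_eq_empty (by omega)]
    simp
  | succ h ih =>
    intro f p q hq hp0 hpos hps
    have hp1 : 1 ≤ p 1 := hpos 1 le_rfl (by omega)
    have hihpos : ∀ i, 1 ≤ i → i ≤ h → 0 < shp p i := by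
      intro i h1 h2
      rw [shp, if_neg (by omega)]
      exact hpos (i + 1) (by omega) (by omega)
    have hihsupp : ∀ i, h < i → shp p i = 0 := by
      intro i hi
      rw [shp]
      split_ifs with h0
      · rfl
      · exact hps (i + 1) (by omega)
    show _ * _ * Gfun h (p 1) (shf f) (shp p) = _
    rw [ih (shf f) (shp p) (p 1) hp1 (by simp [shp]) hihpos hihsupp]
    rcases Nat.eq_zero_or_pos h with rfl | hh
    · -- h = 0
      have hp2 : p 2 = 0 := hps 2 (by omega)
      rw [show Finset.Icc 1 (0 - 1) = (∅ : Finset ℕ) from Finset.Icc_eq_empty (by omega)]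
      try rw [show Finset.Icc 1 (0 + 1 - 1) = (∅ : Finset ℕ) from Finset.Icc_eq_empty (by omega)]
      have e1 : shf f 0 = f 1 := rfl
      have e2 : shp p 0 = 0 := rfl
      have e3 : shp p 1 = p 2 := by rw [shp, if_neg (by omega)]
      rw [e1, e2, e3, hp2]
      simp [Nat.choose_symm]
      ring
    · -- h ≥ 1
      have e1 : shf f h = f (h + 1) := rfl
      have e2 : shp p h = p (h + 1) := by rw [shp, if_neg (by omega)]
      have e3 : shp p 1 = p 2 := by rw [shp, if_neg (by omega)]
      have e4 : shf f 0 = f 1 := rfl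
      -- reindex the product
      set g : ℕ → ℕ := fun i =>
        (f i + p (i+1)).choose (f i) * (f i + p (i+1) + p i - 1).choose (p i - 1) with hg
      have hresh : (∏ i ∈ Finset.Icc 1 (h - 1),
          (shf f i + shp p (i+1)).choose (shf f i)
            * (shf f i + shp p (i+1) + shp p i - 1).choose (shp p i - 1))
          = ∏ i ∈ Finset.Icc 2 h, g i := by
        rw [show Finset.Icc 2 h = Finset.map (addRightEmbedding 1) (Finset.Icc 1 (h-1)) from ?_]
        · rw [Finset.prod_map]
          refine Finset.prod_congr rfl fun i hi => ?_
          rw [Finset.mem_Icc] at hi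
          have ee1 : shf f i = f (i + 1) := rfl
          have ee2 : shp p (i + 1) = p (i + 2) := by rw [shp, if_neg (by omega)]
          have ee3 : shp p i = p (i + 1) := by rw [shp, if_neg (by omega)]
          rw [ee1, ee2, ee3, hg]
          show _ = (f (i+1) + p (i+1+1)).choose (f (i+1))
            * (f (i+1) + p (i+1+1) + p (i+1) - 1).choose (p (i+1) - 1)
          norm_num [addRightEmbedding]
        · rw [Finset.map_add_right_Icc]
          congr 1 <;> omega
      have hsplit : (∏ i ∈ Finset.Icc 1 (h + 1 - 1), g i) = g 1 * ∏ i ∈ Finset.Icc 2 h, g i := by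
        have : Finset.Icc 1 (h + 1 - 1) = insert 1 (Finset.Icc 2 h) := by
          ext x
          simp only [Finset.mem_Icc, Finset.mem_insert]
          omega
        rw [this, Finset.prod_insert (by simp)]
      rw [hresh, e1, e2, e3, e4]
      show _ = _ * (∏ i ∈ Finset.Icc 1 (h + 1 - 1), g i) * _
      rw [hsplit, hg]
      have hg1 : (fun i => (f i + p (i+1)).choose (f i)
          * (f i + p (i+1) + p i - 1).choose (p i - 1)) 1
          = (f 1 + p 2).choose (f 1) * (f 1 + p 2 + p 1 - 1).choose (p 1 - 1) := rfl
      rw [hg1]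
      ring

/-- The closed form matches `mcount`. -/
lemma mcount_eq (a : BSeq) :
    mcount a = (a.f a.h + a.p a.h - 1).choose (a.p a.h - 1)
      * (∏ i ∈ Finset.Icc 1 (a.h - 1),
          (a.f i + a.p (i+1)).choose (a.f i)
            * (a.f i + a.p (i+1) + a.p i - 1).choose (a.p i - 1))
      * ((a.f 0 + a.p 1 + 1 - 1).choose (1 - 1) * (a.f 0 + a.p 1).choose (a.f 0)) := by
  rw [mcount]
  have e1 : ∀ i, (a.p (i+1) + a.f i).choose (a.f i)
      * (a.p (i+1) + a.f i + a.p i - 1).choose (a.p i - 1)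
      = (a.f i + a.p (i+1)).choose (a.f i)
        * (a.f i + a.p (i+1) + a.p i - 1).choose (a.p i - 1) := by
    intro i
    congr 2 <;> omega
  rw [Finset.prod_congr rfl (fun i _ => e1 i)]
  have e2 : (a.p 1 + a.f 0).choose (a.f 0) = (a.f 0 + a.p 1).choose (a.f 0) := by
    congr 1
    omega
  rw [e2]
  simp

/-- singleton-list image identifies paths with `MT 1`. -/
lemma singleton_image (f p : ℕ → ℕ) :
    (fun mz : List Move => [mz]) ''
        {mz | IsMotzkin mz ∧ (∀ k : ℕ, cH mz (k : ℤ) = f k) ∧ (∀ k : ℕ, cU mz (k : ℤ) = p k)}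
      = MT 1 f p := by
  ext vs
  constructor
  · rintro ⟨mz, ⟨hm, hf, hp⟩, rfl⟩
    refine ⟨rfl, ?_, ?_, ?_⟩
    · intro m hm'
      rw [List.mem_singleton] at hm'
      rw [hm']
      exact hm
    · intro k
      show pH [mz] (k : ℤ) = f k
      rw [pH]
      simp [hf k]
    · intro k
      show pU [mz] (k : ℤ) = p k
      rw [pU]
      simp [hp k]
  · rintro ⟨hlen, hval, hpH, hpU⟩
    cases vs with
    | nil => simp at hlen
    | cons m t =>
      cases t with
      | cons x t2 =>
        exfalso
        simp only [List.length_cons] at hlen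
        omega
      | nil =>
        refine ⟨m, ⟨hval m (by simp), ?_, ?_⟩, rfl⟩
        · intro k
          have := hpH k
          rw [pH] at this
          simpa using this
        · intro k
          have := hpU k
          rw [pU] at this
          simpa using this

end MProof



/-- for any building sequence `a ∈ S(n,A)`, the number of Motzkin paths of
width `n` and area `A` whose building sequence is `a` is exactly `m(a)`. -/
theorem motzkin_paths_with_building_sequence (n A : ℕ) (a : BSeq) (ha : a ∈ Sset n A) :
    {mz : List Move | mz.length = n ∧ IsMotzkin mz ∧ area mz = (A : ℤ) ∧
      hasBuildSeq mz a}.ncard = mcount a := by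
  classical
  obtain ⟨hpos, hp0, hpsupp, hfsupp, hwidth, harea⟩ := ha
  have hset : {mz : List Move | mz.length = n ∧ IsMotzkin mz ∧ area mz = (A : ℤ) ∧
      hasBuildSeq mz a} = {mz | IsMotzkin mz ∧ (∀ k : ℕ, MProof.cH mz (k : ℤ) = a.f k) ∧
      (∀ k : ℕ, MProof.cU mz (k : ℤ) = a.p k)} :=
    Set.ext (MProof.mem_set_iff n A a ⟨hpos, hp0, hpsupp, hfsupp, hwidth, harea⟩)
  rw [hset]
  have himg := MProof.singleton_image a.f a.p
  have hinj : Function.Injective (fun mz : List Move => [mz]) := by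
    intro x y hxy
    injection hxy
  rw [← Set.ncard_image_of_injOn (hinj.injOn), himg,
    MProof.MT_count a.h a.f a.p 1 le_rfl hpos hp0 hpsupp hfsupp,
    MProof.Gfun_closed a.h a.f a.p 1 le_rfl hp0 hpos hpsupp, MProof.mcount_eq]
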